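/- arXiv:1209.1649 — 5 statements merged into one kernel-verified Lean document; each statement's English description precedes it below -/
import Mathlib

section
/- Spectral decimation, extension direction (paper's Theorem, Section 5, first half): Let m ≥ 1, let λ' be a real number with λ' ∉ {2, n+2, 2n}, and set λ = (n+2)λ' − λ'² (so that λ'² − (n+2)λ' + λ = 0). Suppose u : ℝ^{n−1} → ℝ is an eigenfunction of Δ_{m−1} with eigenvalue λ. Define u' : ℝ^{n−1} → ℝ to agree with u at every point of V_{m−1} and to satisfy, for every word a ∈ (Fin n)^{m−1} and all r ≠ s with r, s < n, u'(x_{r,s}) = [ (4 − λ')(u(x_{r,r}) + u(x_{s,s})) + 2·∑_{j ≠ r,s} u(x_{j,j}) ] / ( (2 − λ')((n+2) − λ') ). Then u' is an eigenfunction of Δ_m with eigenvalue λ'. -/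
open Finset

noncomputable section

/-- Ambient Euclidean space `ℝ^{n-1}`. -/
abbrev Amb (n : ℕ) := EuclideanSpace ℝ (Fin (n - 1))

/-- The contraction `f_i(x) = (x + x_i)/2`. -/
def fmap {n : ℕ} (pts : Fin n → Amb n) (i : Fin n) (x : Amb n) : Amb n :=
  (2 : ℝ)⁻¹ • (x + pts i)

/-- Composition of contractions along a list (first entry applied last... actually first). -/
def fList {n : ℕ} (pts : Fin n → Amb n) : List (Fin n) → Amb n → Amb n
  | [] => id
  | i :: t => fmap pts i ∘ fList pts t

/-- The `m`-contraction `f_w = f_{w_0} ∘ ⋯ ∘ f_{w_{m-1}}`. -/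
def fWord {n m : ℕ} (pts : Fin n → Amb n) (w : Fin m → Fin n) : Amb n → Amb n :=
  fList pts (List.ofFn w)

/-- The vertex set `V_m = ⋃_w f_w(V_0)`, where `V_0 = {x_0, …, x_{n-1}}`. -/
def V {n : ℕ} (pts : Fin n → Amb n) (m : ℕ) : Set (Amb n) :=
  ⋃ w : Fin m → Fin n, fWord pts w '' Set.range pts

/-- Adjacency in the graph `Γ_m`. -/
def Adj {n : ℕ} (pts : Fin n → Amb n) (m : ℕ) (x y : Amb n) : Prop :=
  x ≠ y ∧ ∃ w : Fin m → Fin n,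
    x ∈ fWord pts w '' Set.range pts ∧ y ∈ fWord pts w '' Set.range pts

/-- The graph Laplacian `Δ_m u (x) = ∑_{y ~ x} (u(x) - u(y))`. -/
def lap {n : ℕ} (pts : Fin n → Amb n) (m : ℕ) (u : Amb n → ℝ) (x : Amb n) : ℝ :=
  ∑ᶠ y ∈ {y | Adj pts m x y}, (u x - u y)

/-- `u` is an eigenfunction of `Δ_m` with eigenvalue `lam`:
`Δ_m u (x) = lam * u x` for all `x ∈ V_m \ V_0`. -/
def IsEigen {n : ℕ} (pts : Fin n → Amb n) (m : ℕ) (u : Amb n → ℝ) (lam : ℝ) : Prop :=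
  ∀ x ∈ V pts m \ V pts 0, lap pts m u x = lam * u x

/-- The point `x_{r,s} = f_a((x_r + x_s)/2)` for a word `a` of length `m-1`. -/
def xpt {n m : ℕ} (pts : Fin n → Amb n) (a : Fin m → Fin n) (r s : Fin n) : Amb n :=
  fWord pts a ((2 : ℝ)⁻¹ • (pts r + pts s))

/-- The graph energy `E_m(u) = ∑_{x ~ y} (u(x) - u(y))²`, summed over unordered
adjacent pairs (each ordered pair counted once, then halved). -/
def energy {n : ℕ} (pts : Fin n → Amb n) (m : ℕ) (u : Amb n → ℝ) : ℝ :=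
  (2 : ℝ)⁻¹ * ∑ᶠ p ∈ {p : Amb n × Amb n | Adj pts m p.1 p.2}, (u p.1 - u p.2) ^ 2

/-!
Since `2 ^ |w| • f_w(x_j) = ∑ i, (weight w i + δ_ij) • x_i` with integer coefficients summing to
`2 ^ |w|`, affine independence turns the geometry of `Γ_L` into arithmetic of these integer
vectors. A parity argument then shows that every point of `V_L \ V_0` is a junction: it lies in
exactly two `L`-cells, which meet only there, so `Δ_L g(x) = 2n g(x) - (sums of g over the two
cells)`. Summing the extension rule over an `(L+1)`-cell `f_{a++[p]}(V_0)` gives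
`u(f_a x_p) + ((n-2)(2-λ') u(f_a x_p) + (2n-λ') S_a) / ((2-λ')(n+2-λ'))`, with `S_a` the sum of `u`
over the parent cell `f_a(V_0)`. At a new point the eigenvalue equation is then an identity in
these cell sums, and at an old point it is the equation `Δ_L u = λ u` multiplied by `2n - λ'`,
using `λ = (n+2)λ' - λ'^2`.
-/

namespace SpectralDecimation

variable {n : ℕ} (pts : Fin n → Amb n)

lemma fList_append_singleton (w : List (Fin n)) (t : Fin n) (x : Amb n) :
    fList pts (w ++ [t]) x = fList pts w (fmap pts t x) := by
  induction w with
  | nil => rfl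
  | cons s w ih => exact congrArg (fmap pts s) ih

lemma fmap_pts_comm (t k : Fin n) : fmap pts t (pts k) = fmap pts k (pts t) := by
  rw [fmap, fmap, add_comm]

lemma fList_append_self (w : List (Fin n)) (j : Fin n) :
    fList pts (w ++ [j]) (pts j) = fList pts w (pts j) := by
  rw [fList_append_singleton, fmap, ← two_smul ℝ, smul_smul]
  norm_num

lemma fList_injective (w : List (Fin n)) : Function.Injective (fList pts w) := by
  induction w with
  | nil => exact Function.injective_id
  | cons t w ih =>
    have hf : Function.Injective (fmap pts t) := fun x y h => by simpa [fmap] using h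
    exact hf.comp ih

lemma xpt_eq {m : ℕ} (a : Fin m → Fin n) (r s : Fin n) :
    xpt pts a r s = fList pts (List.ofFn a ++ [s]) (pts r) := by
  rw [fList_append_singleton]
  rfl

lemma mem_V_iff {L : ℕ} {x : Amb n} :
    x ∈ V pts L ↔ ∃ w : List (Fin n), w.length = L ∧ ∃ j, fList pts w (pts j) = x := by
  simp only [V, Set.mem_iUnion, Set.mem_image, Set.exists_range_iff, fWord]
  constructor
  · rintro ⟨w, j, hj⟩
    exact ⟨List.ofFn w, List.length_ofFn, j, hj⟩
  · rintro ⟨w, rfl, j, hj⟩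
    exact ⟨w.get, j, by rwa [List.ofFn_get]⟩

lemma mem_V_succ {L : ℕ} {x : Amb n} (hx : x ∈ V pts (L + 1)) :
    x ∈ V pts L ∨
      ∃ a t k, a.length = L ∧ t ≠ k ∧ fList pts (a ++ [t]) (pts k) = x := by
  obtain ⟨w, hw, k, rfl⟩ := (mem_V_iff pts).1 hx
  obtain rfl | ⟨a, t, rfl⟩ := w.eq_nil_or_concat
  · simp at hw
  have ha : a.length = L := by simpa using hw
  rw [List.concat_eq_append]
  by_cases htk : t = k
  · subst htk
    exact .inl ((mem_V_iff pts).2 ⟨a, ha, t, (fList_append_self pts a t).symm⟩)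
  · exact .inr ⟨a, t, k, ha, htk, rfl⟩

def weight : List (Fin n) → Fin n → ℕ
  | [], _ => 0
  | t :: w, i => (if i = t then 2 ^ w.length else 0) + weight w i

lemma weight_lt (w : List (Fin n)) (i : Fin n) : weight w i < 2 ^ w.length := by
  induction w with
  | nil => simp [weight]
  | cons t w ih =>
    simp only [weight, List.length_cons, pow_succ]
    split <;> omega

lemma weight_append_singleton (w : List (Fin n)) (t i : Fin n) :
    weight (w ++ [t]) i = 2 * weight w i + if i = t then 1 else 0 := by
  induction w with
  | nil => simp [weight]
  | cons s w ih =>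
    simp only [List.cons_append, weight, ih, List.length_append, List.length_singleton, pow_succ]
    split <;> omega

lemma sum_weight_add_one (w : List (Fin n)) : ∑ i, weight w i + 1 = 2 ^ w.length := by
  induction w with
  | nil => simp [weight]
  | cons t w ih =>
    simp only [weight, sum_add_distrib, sum_ite_eq', mem_univ, if_true, List.length_cons, pow_succ]
    omega

lemma eq_of_weight_eq : ∀ {w v : List (Fin n)}, w.length = v.length →
    (∀ i, weight w i = weight v i) → w = v
  | [], [], _, _ => rfl
  | t :: w, s :: v, hl, h => by
    have hl' : w.length = v.length := by simpa using hl
    have hts : t = s := by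
      by_contra hts
      have h1 := h t
      have h2 := weight_lt v t
      simp only [weight, if_true, if_neg hts, hl'] at h1
      omega
    subst hts
    rw [eq_of_weight_eq hl' fun i => by have := h i; simp only [weight, hl'] at this; omega]

lemma two_pow_smul_fList (w : List (Fin n)) (x : Amb n) :
    (2 : ℝ) ^ w.length • fList pts w x = x + ∑ i, (weight w i : ℝ) • pts i := by
  induction w with
  | nil => simp [fList, weight]
  | cons t w ih =>
    have hsum : ∑ i, (weight (t :: w) i : ℝ) • pts i
        = (2 : ℝ) ^ w.length • pts t + ∑ i, (weight w i : ℝ) • pts i := by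
      simp [weight, add_smul, sum_add_distrib, ite_smul]
    rw [hsum, add_left_comm, ← ih, fList, Function.comp_apply, fmap, List.length_cons, pow_succ]
    module

variable {pts}

lemma weight_add_eq_of_fList_eq (hpts : AffineIndependent ℝ pts) {w v : List (Fin n)}
    {j k : Fin n} (hl : w.length = v.length) (h : fList pts w (pts j) = fList pts v (pts k))
    (i : Fin n) :
    weight w i + (if i = j then 1 else 0) = weight v i + (if i = k then 1 else 0) := by
  have hcomb : ∀ (w : List (Fin n)) j, (2 : ℝ) ^ w.length • fList pts w (pts j) =
      ∑ i, ((weight w i + if i = j then 1 else 0 : ℕ) : ℝ) • pts i := fun w j => by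
    simp [two_pow_smul_fList, add_smul, sum_add_distrib, add_comm]
  have hsum : ∀ (w : List (Fin n)) j,
      ∑ i, ((weight w i + if i = j then 1 else 0 : ℕ) : ℝ) = 2 ^ w.length := fun w j => by
    exact_mod_cast (by simpa [sum_add_distrib] using sum_weight_add_one w)
  exact_mod_cast hpts.eq_of_sum_eq_sum (s := univ)
    (w₁ := fun i => ((weight w i + if i = j then 1 else 0 : ℕ) : ℝ))
    (w₂ := fun i => ((weight v i + if i = k then 1 else 0 : ℕ) : ℝ))
    (by rw [hsum, hsum, hl]) (by rw [← hcomb, ← hcomb, h, hl]) i (mem_univ i)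

lemma fList_ne_fList_append (hpts : AffineIndependent ℝ pts) {v a : List (Fin n)} {j t k : Fin n}
    (hl : v.length = a.length) (htk : t ≠ k) :
    fList pts v (pts j) ≠ fList pts (a ++ [t]) (pts k) := by
  intro h
  rw [← fList_append_self] at h
  have ht := weight_add_eq_of_fList_eq hpts (by simp [hl]) h t
  simp only [weight_append_singleton, if_true, if_neg htk] at ht
  split_ifs at ht <;> omega

lemma eq_or_eq_of_fList_eq_fList_append (hpts : AffineIndependent ℝ pts)
    {w a : List (Fin n)} {j t k : Fin n} (hl : w.length = a.length + 1) (htk : t ≠ k)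
    (h : fList pts w (pts j) = fList pts (a ++ [t]) (pts k)) :
    w = a ++ [t] ∧ j = k ∨ w = a ++ [k] ∧ j = t := by
  obtain rfl | ⟨w, t', rfl⟩ := w.eq_nil_or_concat
  · simp at hl
  rw [List.concat_eq_append] at hl h ⊢
  have hl' : w.length = a.length := by simpa using hl
  have ht'j : t' ≠ j := by
    rintro rfl
    exact fList_ne_fList_append hpts hl' htk (by rwa [fList_append_self] at h)
  have key : ∀ i, 2 * weight w i + (if i = t' then 1 else 0) + (if i = j then 1 else 0) =
      2 * weight a i + (if i = t then 1 else 0) + (if i = k then 1 else 0) := fun i => by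
    have := weight_add_eq_of_fList_eq hpts (by simpa using hl) h i
    simp only [weight_append_singleton] at this
    omega
  -- the odd coordinates of both sides are `{t', j}` and `{t, k}`
  have hodd : ∀ i, i = t' ∨ i = j → i = t ∨ i = k := by
    intro i hi
    by_contra hne
    push Not at hne
    have := key i
    rcases hi with rfl | rfl
    · simp only [if_true, if_neg ht'j, if_neg hne.1, if_neg hne.2] at this; omega
    · simp only [if_true, if_neg ht'j.symm, if_neg hne.1, if_neg hne.2] at this; omega
  have hwa : (t' = t ∧ j = k ∨ t' = k ∧ j = t) → w = a := fun hc =>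
    eq_of_weight_eq hl' fun i => by
      have := key i
      rcases hc with ⟨rfl, rfl⟩ | ⟨rfl, rfl⟩ <;> omega
  rcases hodd t' (.inl rfl), hodd j (.inr rfl) with ⟨rfl | rfl, rfl | rfl⟩
  all_goals first
    | exact absurd rfl ht'j
    | exact .inl ⟨by rw [hwa (.inl ⟨rfl, rfl⟩)], rfl⟩
    | exact .inr ⟨by rw [hwa (.inr ⟨rfl, rfl⟩)], rfl⟩

lemma eq_of_fList_eq_of_fList_eq (hpts : AffineIndependent ℝ pts) {c d : List (Fin n)}
    {p q j k : Fin n} (hl : c.length = d.length) (hpj : p ≠ j)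
    (hp : fList pts c (pts p) = fList pts d (pts q))
    (hj : fList pts c (pts j) = fList pts d (pts k)) : c = d := by
  have ep := weight_add_eq_of_fList_eq hpts hl hp
  have hpq : p = q := by
    by_contra hpq
    have h1 := ep p
    have h2 := weight_add_eq_of_fList_eq hpts hl hj p
    simp only [if_true, if_neg hpq, if_neg hpj] at h1 h2
    split_ifs at h2 <;> omega
  subst hpq
  exact eq_of_weight_eq hl fun i => by have := ep i; omega

variable (pts) in
structure IsJunction (L : ℕ) (x : Amb n) (c d : List (Fin n)) (p q : Fin n) : Prop where
  length_left : c.length = L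
  length_right : d.length = L
  left_ne_right : c ≠ d
  fList_left : fList pts c (pts p) = x
  fList_right : fList pts d (pts q) = x
  eq_or_eq : ∀ v k, v.length = L → fList pts v (pts k) = x →
    v = c ∧ k = p ∨ v = d ∧ k = q

lemma isJunction_append (hpts : AffineIndependent ℝ pts) (a : List (Fin n)) {t k : Fin n}
    (htk : t ≠ k) :
    IsJunction pts (a.length + 1) (fList pts (a ++ [t]) (pts k)) (a ++ [t]) (a ++ [k]) k t where
  length_left := by simp
  length_right := by simp
  left_ne_right := by simpa using htk
  fList_left := rfl
  fList_right := by rw [fList_append_singleton, fList_append_singleton, fmap_pts_comm]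
  eq_or_eq _ _ hl h := eq_or_eq_of_fList_eq_fList_append hpts hl htk h

lemma IsJunction.append (hpts : AffineIndependent ℝ pts) {L : ℕ} {x : Amb n}
    {c d : List (Fin n)} {p q : Fin n} (hx : IsJunction pts L x c d p q) :
    IsJunction pts (L + 1) x (c ++ [p]) (d ++ [q]) p q where
  length_left := by simp [hx.length_left]
  length_right := by simp [hx.length_right]
  left_ne_right h := hx.left_ne_right (List.append_inj' h rfl).1
  fList_left := by rw [fList_append_self, hx.fList_left]
  fList_right := by rw [fList_append_self, hx.fList_right]
  eq_or_eq v k hl h := by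
    obtain rfl | ⟨v, t, rfl⟩ := v.eq_nil_or_concat
    · simp at hl
    rw [List.concat_eq_append] at hl h ⊢
    have hl' : v.length = L := by simpa using hl
    by_cases htk : t = k
    · subst htk
      rw [fList_append_self] at h
      rcases hx.eq_or_eq v t hl' h with ⟨rfl, rfl⟩ | ⟨rfl, rfl⟩ <;> simp
    · exact absurd (hx.fList_left.trans h.symm)
        (fList_ne_fList_append hpts (hx.length_left.trans hl'.symm) htk)

lemma exists_isJunction (hpts : AffineIndependent ℝ pts) {L : ℕ} {x : Amb n}
    (hx : x ∈ V pts L) (hx0 : x ∉ V pts 0) : ∃ c d p q, IsJunction pts L x c d p q := by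
  induction L with
  | zero => exact absurd hx hx0
  | succ L ih =>
    rcases mem_V_succ pts hx with hxL | ⟨a, t, k, rfl, htk, rfl⟩
    · obtain ⟨c, d, p, q, hJ⟩ := ih hxL
      exact ⟨_, _, _, _, hJ.append hpts⟩
    · exact ⟨_, _, _, _, isJunction_append hpts a htk⟩

lemma adj_iff {L : ℕ} {x y : Amb n} :
    Adj pts L x y ↔ x ≠ y ∧ ∃ w : List (Fin n), w.length = L ∧
      (∃ j, fList pts w (pts j) = x) ∧ ∃ k, fList pts w (pts k) = y := by
  simp only [Adj, Set.mem_image, Set.exists_range_iff, fWord]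
  refine and_congr_right fun _ => ⟨?_, ?_⟩
  · rintro ⟨w, hx, hy⟩
    exact ⟨List.ofFn w, List.length_ofFn, hx, hy⟩
  · rintro ⟨w, rfl, hx, hy⟩
    exact ⟨w.get, by rwa [List.ofFn_get], by rwa [List.ofFn_get]⟩

open Classical in
lemma IsJunction.lap_eq (hpts : AffineIndependent ℝ pts) {L : ℕ} {x : Amb n}
    {c d : List (Fin n)} {p q : Fin n} (hx : IsJunction pts L x c d p q) (g : Amb n → ℝ) :
    lap pts L g x =
      2 * n * g x - ∑ j, g (fList pts c (pts j)) - ∑ j, g (fList pts d (pts j)) := by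
  set C := univ.image fun j => fList pts c (pts j)
  set D := univ.image fun j => fList pts d (pts j)
  have hnbr : {y | Adj pts L x y} = ↑((C ∪ D).erase x) := by
    ext y
    simp only [Set.mem_ofPred_eq, adj_iff, coe_erase, coe_union, Set.mem_sdiff, Set.mem_union,
      mem_coe, Set.mem_singleton_iff, C, D, mem_image, mem_univ, true_and]
    constructor
    · rintro ⟨hxy, w, hw, ⟨j, hj⟩, hy⟩
      rcases hx.eq_or_eq w j hw hj with ⟨rfl, -⟩ | ⟨rfl, -⟩
      exacts [⟨.inl hy, Ne.symm hxy⟩, ⟨.inr hy, Ne.symm hxy⟩]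
    · rintro ⟨hy | hy, hyx⟩
      exacts [⟨Ne.symm hyx, c, hx.length_left, ⟨p, hx.fList_left⟩, hy⟩,
        ⟨Ne.symm hyx, d, hx.length_right, ⟨q, hx.fList_right⟩, hy⟩]
  have hCD : C ∩ D = {x} := by
    ext y
    simp only [mem_inter, mem_singleton, C, D, mem_image, mem_univ, true_and]
    constructor
    · rintro ⟨⟨j, rfl⟩, ⟨k, hk⟩⟩
      by_contra hjx
      have hpj : p ≠ j := by rintro rfl; exact hjx hx.fList_left
      exact hx.left_ne_right <| eq_of_fList_eq_of_fList_eq hpts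
        (hx.length_left.trans hx.length_right.symm) hpj
        (hx.fList_left.trans hx.fList_right.symm) hk.symm
    · rintro rfl
      exact ⟨⟨p, hx.fList_left⟩, ⟨q, hx.fList_right⟩⟩
  have hcell : ∀ e : List (Fin n), ∑ y ∈ univ.image (fun j => fList pts e (pts j)),
      (g x - g y) = n * g x - ∑ j, g (fList pts e (pts j)) := fun e => by
    rw [sum_image fun _ _ _ _ h => hpts.injective (fList_injective pts e h)]
    simp [sum_sub_distrib]
  have hunion := sum_union_inter (s₁ := C) (s₂ := D) (f := fun y => g x - g y)
  rw [hCD, sum_singleton, sub_self, add_zero, hcell, hcell] at hunion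
  rw [lap, hnbr, finsum_mem_coe_finset, sum_erase (f := fun y => g x - g y) _ (sub_self (g x)),
    hunion]
  ring

lemma sum_filter_ne_ne {ι M : Type*} [Fintype ι] [DecidableEq ι] [AddCommGroup M] (v : ι → M)
    {r s : ι} (hrs : r ≠ s) :
    ∑ k ∈ univ.filter (fun k => k ≠ r ∧ k ≠ s), v k = ∑ k, v k - v r - v s := by
  have hfilter : univ.filter (fun k => k ≠ r ∧ k ≠ s) = (univ.erase r).erase s := by
    ext k
    simp [and_comm]
  rw [hfilter, sum_erase_eq_sub (mem_erase.2 ⟨hrs.symm, mem_univ s⟩),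
    sum_erase_eq_sub (mem_univ r)]

lemma sum_erase_decimation {ι : Type*} [Fintype ι] [DecidableEq ι] (v : ι → ℝ) (μ : ℝ)
    (p : ι) :
    ∑ j ∈ univ.erase p,
        ((4 - μ) * (v j + v p) + 2 * ∑ k ∈ univ.filter (fun k => k ≠ j ∧ k ≠ p), v k) =
      (Fintype.card ι - 2) * (2 - μ) * v p + (2 * Fintype.card ι - μ) * ∑ k, v k := by
  have hterm : ∀ j ∈ univ.erase p,
      (4 - μ) * (v j + v p) + 2 * ∑ k ∈ univ.filter (fun k => k ≠ j ∧ k ≠ p), v k =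
        (2 - μ) * v p + 2 * ∑ k, v k + (2 - μ) * v j := fun j hj => by
    rw [sum_filter_ne_ne v (ne_of_mem_erase hj)]
    ring
  have hcard : ((Fintype.card ι - 1 : ℕ) : ℝ) = Fintype.card ι - 1 :=
    Nat.cast_pred (Fintype.card_pos_iff.2 ⟨p⟩)
  rw [sum_congr rfl hterm, sum_add_distrib, sum_const, card_erase_of_mem (mem_univ p), card_univ,
    nsmul_eq_mul, hcard, ← mul_sum, sum_erase_eq_sub (mem_univ p)]
  ring

variable (pts) in
/-- `f_{a ++ [s]}(x_r)` is the point `x_{r,s}` of the cell `f_a(V_0)`. -/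
structure IsDecimationExtension (L : ℕ) (lam' : ℝ) (u u' : Amb n → ℝ) : Prop where
  apply_old : ∀ a : List (Fin n), a.length = L → ∀ j,
    u' (fList pts a (pts j)) = u (fList pts a (pts j))
  apply_new : ∀ a : List (Fin n), a.length = L → ∀ r s, r ≠ s →
    u' (fList pts (a ++ [s]) (pts r)) =
      ((4 - lam') * (u (fList pts a (pts r)) + u (fList pts a (pts s))) +
          2 * ∑ j ∈ univ.filter (fun j => j ≠ r ∧ j ≠ s), u (fList pts a (pts j))) /
        ((2 - lam') * (((n : ℝ) + 2) - lam'))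

namespace IsDecimationExtension

variable {L : ℕ} {lam' : ℝ} {u u' : Amb n → ℝ}

lemma of_xpt (hagree : ∀ x ∈ V pts L, u' x = u x)
    (hext : ∀ (a : Fin L → Fin n) (r s : Fin n), r ≠ s →
      u' (xpt pts a r s) =
        ((4 - lam') * (u (xpt pts a r r) + u (xpt pts a s s)) +
            2 * ∑ j ∈ univ.filter (fun j => j ≠ r ∧ j ≠ s), u (xpt pts a j j)) /
          ((2 - lam') * (((n : ℝ) + 2) - lam'))) :
    IsDecimationExtension pts L lam' u u' where
  apply_old a ha j := hagree _ ((mem_V_iff pts).2 ⟨a, ha, j, rfl⟩)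
  apply_new a ha r s hrs := by
    subst ha
    simpa only [xpt_eq, fList_append_self, List.ofFn_get] using hext a.get r s hrs

lemma sum_cell (he : IsDecimationExtension pts L lam' u u') {a : List (Fin n)}
    (ha : a.length = L) (p : Fin n) :
    ∑ j, u' (fList pts (a ++ [p]) (pts j)) = u (fList pts a (pts p)) +
      ((n - 2) * (2 - lam') * u (fList pts a (pts p)) +
          (2 * n - lam') * ∑ k, u (fList pts a (pts k))) /
        ((2 - lam') * (((n : ℝ) + 2) - lam')) := by
  rw [← add_sum_erase _ _ (mem_univ p), fList_append_self, he.apply_old a ha,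
    sum_congr rfl fun j hj => he.apply_new a ha j p (ne_of_mem_erase hj),
    ← sum_div, sum_erase_decimation (fun k => u (fList pts a (pts k))), Fintype.card_fin]

lemma lap_at_new (hpts : AffineIndependent ℝ pts) (he : IsDecimationExtension pts L lam' u u')
    (h2 : lam' ≠ 2) (hn2 : lam' ≠ (n : ℝ) + 2) {a : List (Fin n)} (ha : a.length = L)
    {r s : Fin n} (hrs : r ≠ s) :
    lap pts (L + 1) u' (fList pts (a ++ [s]) (pts r)) =
      lam' * u' (fList pts (a ++ [s]) (pts r)) := by
  have hJ := isJunction_append hpts a hrs.symm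
  rw [ha] at hJ
  rw [hJ.lap_eq hpts, he.sum_cell ha, he.sum_cell ha, he.apply_new a ha r s hrs,
    sum_filter_ne_ne _ hrs]
  have : (2 - lam') * (((n : ℝ) + 2) - lam') ≠ 0 :=
    mul_ne_zero (sub_ne_zero.2 h2.symm) (sub_ne_zero.2 hn2.symm)
  field_simp
  ring

lemma lap_at_old (hpts : AffineIndependent ℝ pts)
    (he : IsDecimationExtension pts L lam' u u') (h2 : lam' ≠ 2) (hn2 : lam' ≠ (n : ℝ) + 2)
    {lam : ℝ} (hlam : lam = ((n : ℝ) + 2) * lam' - lam' ^ 2) {x : Amb n} {c d : List (Fin n)}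
    {p q : Fin n} (hx : IsJunction pts L x c d p q) (hu : lap pts L u x = lam * u x) :
    lap pts (L + 1) u' x = lam' * u' x := by
  have hux : u' x = u x := hx.fList_left ▸ he.apply_old c hx.length_left p
  rw [(hx.append hpts).lap_eq hpts, he.sum_cell hx.length_left, he.sum_cell hx.length_right,
    hx.fList_left, hx.fList_right, hux]
  rw [hx.lap_eq hpts, hlam] at hu
  have : (2 - lam') * (((n : ℝ) + 2) - lam') ≠ 0 :=
    mul_ne_zero (sub_ne_zero.2 h2.symm) (sub_ne_zero.2 hn2.symm)
  field_simp
  linear_combination (2 * n - lam') * hu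

theorem isEigen (hpts : AffineIndependent ℝ pts) (he : IsDecimationExtension pts L lam' u u')
    (h2 : lam' ≠ 2) (hn2 : lam' ≠ (n : ℝ) + 2) {lam : ℝ}
    (hlam : lam = ((n : ℝ) + 2) * lam' - lam' ^ 2) (hu : IsEigen pts L u lam) :
    IsEigen pts (L + 1) u' lam' := by
  rintro x ⟨hx, hx0⟩
  rcases mem_V_succ pts hx with hxL | ⟨a, t, k, ha, htk, rfl⟩
  · obtain ⟨c, d, p, q, hJ⟩ := exists_isJunction hpts hxL hx0
    exact he.lap_at_old hpts h2 hn2 hlam hJ (hu x ⟨hxL, hx0⟩)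
  · exact he.lap_at_new hpts h2 hn2 ha htk.symm

end IsDecimationExtension

end SpectralDecimation

theorem spectral_decimation_extension_general
    (n : ℕ) (pts : Fin n → Amb n) (hpts : AffineIndependent ℝ pts)
    (m : ℕ) (lam' lam : ℝ)
    (h2 : lam' ≠ 2) (hn2 : lam' ≠ (n : ℝ) + 2)
    (hlam : lam = ((n : ℝ) + 2) * lam' - lam' ^ 2)
    (u u' : Amb n → ℝ)
    (hu : IsEigen pts (m - 1) u lam)
    (hagree : ∀ x ∈ V pts (m - 1), u' x = u x)
    (hext : ∀ (a : Fin (m - 1) → Fin n) (r s : Fin n), r ≠ s →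
      u' (xpt pts a r s) =
        ((4 - lam') * (u (xpt pts a r r) + u (xpt pts a s s)) +
            2 * ∑ j ∈ Finset.univ.filter (fun j => j ≠ r ∧ j ≠ s), u (xpt pts a j j)) /
          ((2 - lam') * (((n : ℝ) + 2) - lam'))) :
    IsEigen pts m u' lam' := by
  cases m with
  | zero => exact fun x hx => absurd hx.1 hx.2
  | succ L =>
    exact (SpectralDecimation.IsDecimationExtension.of_xpt hagree hext).isEigen hpts h2 hn2
      hlam hu

/-- Spectral decimation, extension direction. -/
theorem spectral_decimation_extension
    (n : ℕ) (hn : 2 ≤ n) (pts : Fin n → Amb n) (hpts : AffineIndependent ℝ pts)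
    (m : ℕ) (hm : 1 ≤ m) (lam' lam : ℝ)
    (h2 : lam' ≠ 2) (hn2 : lam' ≠ (n : ℝ) + 2) (h2n : lam' ≠ 2 * n)
    (hlam : lam = ((n : ℝ) + 2) * lam' - lam' ^ 2)
    (u u' : Amb n → ℝ)
    (hu : IsEigen pts (m - 1) u lam)
    (hagree : ∀ x ∈ V pts (m - 1), u' x = u x)
    (hext : ∀ (a : Fin (m - 1) → Fin n) (r s : Fin n), r ≠ s →
      u' (xpt pts a r s) =
        ((4 - lam') * (u (xpt pts a r r) + u (xpt pts a s s)) +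
            2 * ∑ j ∈ Finset.univ.filter (fun j => j ≠ r ∧ j ≠ s), u (xpt pts a j j)) /
          ((2 - lam') * (((n : ℝ) + 2) - lam'))) :
    IsEigen pts m u' lam' :=
  spectral_decimation_extension_general n pts hpts m lam' lam h2 hn2 hlam u u' hu hagree hext
end
end

section
/- Spectral decimation, restriction direction (paper's Theorem, Section 5, second half): Let m ≥ 1 and suppose u : ℝ^{n−1} → ℝ is an eigenfunction of Δ_m with eigenvalue λ' where λ' ∉ {2, n+2, 2n}. Then the restriction of u to V_{m−1} is an eigenfunction of Δ_{m−1} with eigenvalue λ = (n+2)λ' − λ'² (i.e. λ satisfies λ'² − (n+2)λ' + λ = 0). -/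
open Finset

noncomputable section

namespace SD

variable {n : ℕ} (pts : Fin n → Amb n)

/-- Barycentric coordinates of `fList l (pts i)`. -/
def bary : List (Fin n) → Fin n → Fin n → ℝ
  | [], i, j => if j = i then 1 else 0
  | a :: t, i, j => ((if j = a then 1 else 0) + bary t i j) / 2

def P (l : List (Fin n)) (i : Fin n) : Amb n := fList pts l (pts i)

@[simp] lemma P_nil (i : Fin n) : P pts [] i = pts i := rfl

lemma P_cons (a : Fin n) (l : List (Fin n)) (i : Fin n) :
    P pts (a :: l) i = fmap pts a (P pts l i) := rfl

lemma fList_append (l₁ l₂ : List (Fin n)) (x : Amb n) :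
    fList pts (l₁ ++ l₂) x = fList pts l₁ (fList pts l₂ x) := by
  induction l₁ with
  | nil => rfl
  | cons a t ih => simp [fList, Function.comp, ih]

lemma fmap_self (i : Fin n) : fmap pts i (pts i) = pts i := by
  unfold fmap
  rw [← two_smul ℝ (pts i), smul_smul]
  norm_num

lemma P_replicate (t : ℕ) (s : Fin n) : P pts (List.replicate t s) s = pts s := by
  induction t with
  | zero => rfl
  | succ k ih => rw [List.replicate_succ, P_cons, ih, fmap_self]

lemma bary_sum (l : List (Fin n)) (i : Fin n) : ∑ j, bary l i j = 1 := by
  induction l with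
  | nil => simp [bary]
  | cons a t ih =>
    simp only [bary, ← Finset.sum_div, Finset.sum_add_distrib, ih]
    simp
  
lemma bary_nonneg (l : List (Fin n)) (i j : Fin n) : 0 ≤ bary l i j := by
  induction l with
  | nil => simp [bary]; positivity
  | cons a t ih => simp only [bary]; positivity

lemma bary_le_one (l : List (Fin n)) (i j : Fin n) : bary l i j ≤ 1 := by
  induction l with
  | nil => simp [bary]; split <;> norm_num
  | cons a t ih => simp only [bary]; split <;> linarith

lemma P_eq_comb (l : List (Fin n)) (i : Fin n) :
    P pts l i = ∑ j, bary l i j • pts j := by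
  induction l with
  | nil =>
    simp only [P_nil, bary]
    rw [Finset.sum_eq_single i]
    · simp
    · intro b _ hb; simp [hb]
    · simp
  | cons a t ih =>
    rw [P_cons, ih]
    unfold fmap
    have key : ∀ j : Fin n, bary (a :: t) i j • pts j
        = (2:ℝ)⁻¹ • (bary t i j • pts j) + (if j = a then (2:ℝ)⁻¹ • pts j else 0) := by
      intro j
      by_cases h : j = a <;>
        simp [bary, h, div_eq_inv_mul, mul_add, add_smul, smul_smul, add_comm]
    rw [smul_add, Finset.smul_sum]
    simp_rw [key]
    rw [Finset.sum_add_distrib, Finset.sum_ite_eq' Finset.univ a fun j => (2:ℝ)⁻¹ • pts j]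
    simp


/-- Equality of barycentric coordinates implies equality of points. -/
lemma P_eq_of_bary_eq {l l' : List (Fin n)} {i i' : Fin n}
    (h : bary l i = bary l' i') : P pts l i = P pts l' i' := by
  rw [P_eq_comb, P_eq_comb, h]

lemma bary_eq_of_P_eq (hpts : AffineIndependent ℝ pts) {l l' : List (Fin n)} {i i' : Fin n}
    (h : P pts l i = P pts l' i') : bary l i = bary l' i' := by
  have := (affineIndependent_iff_eq_of_fintype_affineCombination_eq ℝ pts).1 hpts
    (bary l i) (bary l' i') (bary_sum l i) (bary_sum l' i') ?_
  · exact this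
  · rw [Finset.affineCombination_eq_linear_combination _ _ _ (bary_sum l i),
      Finset.affineCombination_eq_linear_combination _ _ _ (bary_sum l' i'),
      ← P_eq_comb, ← P_eq_comb, h]

lemma bary_eq_one {l : List (Fin n)} {i j : Fin n} (h : bary l i j = 1) :
    l = List.replicate l.length j ∧ i = j := by
  induction l with
  | nil =>
    simp only [bary] at h
    split at h
    · simp_all [eq_comm]
    · norm_num at h
  | cons a t ih =>
    simp only [bary] at h
    have hb := bary_le_one (n := n) t i j
    have hn := bary_nonneg (n := n) t i j
    by_cases hja : j = a
    · rw [if_pos hja] at h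
      have h1 : bary t i j = 1 := by linarith
      obtain ⟨ht, hi⟩ := ih h1
      subst hja
      simp [List.replicate_succ, ← ht, hi]
    · rw [if_neg hja] at h
      exact absurd h (by intro hh; linarith)

lemma bary_replicate (t : ℕ) (s j : Fin n) :
    bary (List.replicate t s) s j = if j = s then 1 else 0 := by
  induction t with
  | zero => simp [bary]
  | succ k ih => rw [List.replicate_succ]; simp only [bary, ih]; split <;> norm_num

/-- Core address classification. -/
lemma bary_addr : ∀ (l l' : List (Fin n)) (i i' : Fin n), l.length = l'.length →
    bary l i = bary l' i' →
    (l = l' ∧ i = i') ∨ ∃ (c : List (Fin n)) (r s : Fin n) (t : ℕ), r ≠ s ∧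
      l = c ++ r :: List.replicate t s ∧ i = s ∧
      l' = c ++ s :: List.replicate t r ∧ i' = r := by
  intro l
  induction l with
  | nil =>
    intro l' i i' hlen h
    have : l' = [] := by cases l' <;> simp_all
    subst this
    left
    refine ⟨rfl, ?_⟩
    by_cases hii : i = i'
    · exact hii
    · have := congrFun h i
      simp [bary, hii] at this
  | cons a tl ih =>
    intro l' i i' hlen h
    match l' with
    | [] => simp at hlen
    | a' :: tl' =>
      simp only [List.length_cons, Nat.succ_inj] at hlen
      by_cases haa : a = a'
      · subst haa
        have htl : bary tl i = bary tl' i' := by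
          funext j
          have := congrFun h j
          simp only [bary] at this
          field_simp at this
          linarith [this]
        rcases ih tl' i i' hlen htl with ⟨h1, h2⟩ | ⟨c, r, s, t, hrs, h1, h2, h3, h4⟩
        · left; exact ⟨by rw [h1], h2⟩
        · right; exact ⟨a :: c, r, s, t, hrs, by simp [h1], h2, by simp [h3], h4⟩
      · -- a ≠ a'
        right
        have h_a := congrFun h a
        have h_a' := congrFun h a'
        simp only [bary] at h_a h_a'
        rw [if_pos trivial, if_neg haa] at h_a
        rw [if_neg (fun hh : a' = a => haa hh.symm), if_pos trivial] at h_a'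
        have hb1 := bary_le_one (n := n) tl' i' a
        have hn1 := bary_nonneg (n := n) tl i a
        have h1 : bary tl' i' a = 1 := by linarith
        obtain ⟨htl', hi'⟩ := bary_eq_one h1
        have h2 : bary tl' i' a' = 0 := by
          rw [htl', hi', bary_replicate, if_neg (fun hh : a' = a => haa hh.symm)]
        rw [h2] at h_a'
        have h3 : bary tl i a' = 1 := by linarith
        obtain ⟨htl, hi⟩ := bary_eq_one h3
        refine ⟨[], a, a', tl.length, haa, ?_, hi, ?_, hi'⟩
        · simpa using htl
        · rw [List.nil_append, htl', hlen]

variable {pts}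

/-- The classification at the level of points. -/
lemma P_addr (hpts : AffineIndependent ℝ pts) {l l' : List (Fin n)} {i i' : Fin n}
    (hlen : l.length = l'.length) (h : P pts l i = P pts l' i') :
    (l = l' ∧ i = i') ∨ ∃ (c : List (Fin n)) (r s : Fin n) (t : ℕ), r ≠ s ∧
      l = c ++ r :: List.replicate t s ∧ i = s ∧
      l' = c ++ s :: List.replicate t r ∧ i' = r :=
  bary_addr l l' i i' hlen (bary_eq_of_P_eq pts hpts h)

lemma P_swap (c : List (Fin n)) (r s : Fin n) (t : ℕ) :
    P pts (c ++ r :: List.replicate t s) s = P pts (c ++ s :: List.replicate t r) r := by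
  show fList pts _ (pts s) = fList pts _ (pts r)
  rw [fList_append, fList_append]
  refine congrArg _ ?_
  show fList pts (r :: List.replicate t s) (pts s) = fList pts (s :: List.replicate t r) (pts r)
  simp only [fList, Function.comp]
  rw [show fList pts (List.replicate t s) (pts s) = pts s from P_replicate pts t s,
    show fList pts (List.replicate t r) (pts r) = pts r from P_replicate pts t r]
  unfold fmap
  rw [add_comm]

lemma P_snoc_self (w : List (Fin n)) (j : Fin n) : P pts (w ++ [j]) j = P pts w j := by
  show fList pts _ _ = _
  rw [fList_append]
  show fList pts w (fList pts [j] (pts j)) = _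
  simp only [fList, Function.comp, id]
  rw [fmap_self]
  rfl

lemma P_index_inj (hpts : AffineIndependent ℝ pts) {l : List (Fin n)} {i i' : Fin n}
    (h : P pts l i = P pts l i') : i = i' := by
  rcases P_addr hpts rfl h with ⟨_, h2⟩ | ⟨c, r, s, t, hrs, h1, h2, h3, h4⟩
  · exact h2
  · exfalso
    rw [h1] at h3
    have := List.append_cancel_left h3
    simp at this
    exact hrs this.1

/-- Unique decomposition with a fixed tail letter. -/
lemma uniqDecomp : ∀ (q t : ℕ) (c c₁ : List (Fin n)) (r r₁ s : Fin n), r ≠ s → r₁ ≠ s →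
    c ++ r :: List.replicate q s = c₁ ++ r₁ :: List.replicate t s →
    c = c₁ ∧ r = r₁ ∧ q = t := by
  have concat_inj : ∀ (l₁ l₂ : List (Fin n)) (x y : Fin n),
      l₁ ++ [x] = l₂ ++ [y] → l₁ = l₂ ∧ x = y := by
    intro l₁ l₂ x y hh
    have := congrArg List.reverse hh
    simp only [List.reverse_append, List.reverse_cons, List.reverse_nil, List.nil_append] at this
    simp at this
    tauto
  intro q
  induction q with
  | zero =>
    intro t c c₁ r r₁ s hr hr1 heq
    match t with
    | 0 =>
      have := concat_inj c c₁ r r₁ (by simpa using heq)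
      exact ⟨this.1, this.2, rfl⟩
    | t' + 1 =>
      exfalso
      simp only [List.replicate_succ', ← List.cons_append, ← List.append_assoc] at heq
      have := concat_inj c (c₁ ++ r₁ :: List.replicate t' s) r s (by simpa using heq)
      exact hr this.2
  | succ q' ihq =>
    intro t c c₁ r r₁ s hr hr1 heq
    match t with
    | 0 =>
      exfalso
      simp only [List.replicate_succ', ← List.cons_append, ← List.append_assoc] at heq
      have := concat_inj (c ++ r :: List.replicate q' s) c₁ s r₁ (by simpa using heq)
      exact hr1 this.2.symm
    | t' + 1 =>
      simp only [List.replicate_succ', ← List.cons_append, ← List.append_assoc] at heq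
      have h2 := concat_inj _ _ _ _ heq
      obtain ⟨h3, h4, h5⟩ := ihq t' c c₁ r r₁ s hr hr1 (by simpa using h2.1)
      exact ⟨h3, h4, by omega⟩

lemma ofFn_get_cast {m : ℕ} (l : List (Fin n)) (hlen : l.length = m) :
    List.ofFn (fun k : Fin m => l.get (Fin.cast hlen.symm k)) = l := by
  apply List.ext_getElem <;> simp [hlen]

lemma mem_V_iff (m : ℕ) (x : Amb n) :
    x ∈ V pts m ↔ ∃ (l : List (Fin n)) (i : Fin n), l.length = m ∧ x = P pts l i := by
  constructor
  · rintro hx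
    obtain ⟨S, ⟨w, rfl⟩, hxS⟩ := hx
    obtain ⟨y, ⟨i, rfl⟩, rfl⟩ := hxS
    exact ⟨List.ofFn w, i, by simp, rfl⟩
  · rintro ⟨l, i, hlen, rfl⟩
    refine Set.mem_iUnion.2 ⟨fun k => l.get (Fin.cast hlen.symm k), ⟨pts i, ⟨i, rfl⟩, ?_⟩⟩
    show fList pts (List.ofFn _) (pts i) = fList pts l (pts i)
    rw [ofFn_get_cast l hlen]

lemma adj_iff (m : ℕ) (x y : Amb n) :
    Adj pts m x y ↔ x ≠ y ∧ ∃ (l : List (Fin n)) (i i' : Fin n),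
      l.length = m ∧ x = P pts l i ∧ y = P pts l i' := by
  constructor
  · rintro ⟨hxy, w, ⟨x', ⟨i, rfl⟩, rfl⟩, ⟨y', ⟨i', rfl⟩, rfl⟩⟩
    exact ⟨hxy, List.ofFn w, i, i', by simp, rfl, rfl⟩
  · rintro ⟨hxy, l, i, i', hlen, rfl, rfl⟩
    refine ⟨hxy, fun k => l.get (Fin.cast hlen.symm k), ?_, ?_⟩
    · refine ⟨pts i, ⟨i, rfl⟩, ?_⟩
      show fList pts (List.ofFn _) (pts i) = fList pts l (pts i)
      rw [ofFn_get_cast l hlen]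
    · refine ⟨pts i', ⟨i', rfl⟩, ?_⟩
      show fList pts (List.ofFn _) (pts i') = fList pts l (pts i')
      rw [ofFn_get_cast l hlen]

lemma V_zero : V pts 0 = Set.range pts := by
  ext x
  rw [mem_V_iff]
  constructor
  · rintro ⟨l, i, hlen, rfl⟩
    rw [List.length_eq_zero_iff] at hlen
    subst hlen
    exact ⟨i, rfl⟩
  · rintro ⟨i, rfl⟩
    exact ⟨[], i, rfl, rfl⟩

/-- Unique swap pairs. -/
lemma pairUnique {c c' : List (Fin n)} {r s r' s' : Fin n} {q t : ℕ}
    (hrs : r ≠ s) (hrs' : r' ≠ s')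
    (h1 : c ++ r :: List.replicate q s = c' ++ r' :: List.replicate t s')
    (h2 : c ++ s :: List.replicate q r = c' ++ s' :: List.replicate t r') :
    c = c' ∧ r = r' ∧ s = s' ∧ q = t := by
  rcases List.append_eq_append_iff.1 h1 with ⟨e, hc', he⟩ | ⟨e, hc, he⟩
  · subst hc'
    match e with
    | [] =>
      simp only [List.append_nil] at h2 ⊢
      have h2' := List.append_cancel_left h2
      injection he with hr hrep
      injection h2' with hs hrep2
      have hq : q = t := by simpa using congrArg List.length hrep
      exact ⟨by simp, hr, hs, hq⟩
    | a :: e' =>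
      exfalso
      rw [List.append_assoc] at h2
      have h2' := List.append_cancel_left h2
      simp only [List.cons_append] at h2' he
      injection he with hr hetail
      injection h2' with hs h2tail
      exact hrs (hr.trans hs.symm)
  · subst hc
    match e with
    | [] =>
      simp only [List.append_nil] at h2 he ⊢
      have h2' := List.append_cancel_left h2
      injection he with hr hrep
      injection h2' with hs hrep2
      have hq : q = t := by simpa using (congrArg List.length hrep).symm
      exact ⟨by simp, hr.symm, hs, hq⟩
    | a :: e' =>
      exfalso
      rw [List.append_assoc] at h2
      have h2' := (List.append_cancel_left h2).symm
      simp only [List.cons_append] at h2' he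
      injection he with hr hetail
      injection h2' with hs h2tail
      exact hrs' (hr.trans hs.symm)

local instance : DecidableEq (Amb n) := Classical.decEq _

lemma notMem_V0 (hpts : AffineIndependent ℝ pts) (c : List (Fin n)) {r s : Fin n} (q : ℕ)
    (hrs : r ≠ s) : P pts (c ++ r :: List.replicate q s) s ∉ Set.range pts := by
  rintro ⟨v, hv⟩
  have hv' : P pts (c ++ r :: List.replicate q s) s
      = P pts (List.replicate (c ++ r :: List.replicate q s).length v) v := by
    rw [P_replicate]; exact hv.symm
  have hlen : (c ++ r :: List.replicate q s).length
      = (List.replicate (c ++ r :: List.replicate q s).length v).length := by simp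
  rcases P_addr hpts hlen hv' with ⟨h1, h2⟩ | ⟨c', r', s', t', hr's', h1, h2, h3, h4⟩
  · have hrv : r = v := List.eq_of_mem_replicate (h1 ▸ (by simp : r ∈ c ++ r :: List.replicate q s))
    exact hrs (hrv.trans h2.symm)
  · -- h3 : replicate _ v = c' ++ s' :: rep t' r', h4 : v = r'
    have hs'v : s' = v :=
      List.eq_of_mem_replicate (h3 ▸ (by simp : s' ∈ c' ++ s' :: List.replicate t' r'))
    exact hr's' (h4.symm.trans hs'v.symm)

/-- The neighbor set of the point `P (c ++ r :: s^q) s` in `Γ_{m'}`. -/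
lemma cell_neighbors (hpts : AffineIndependent ℝ pts) (c : List (Fin n)) {r s : Fin n} (q : ℕ)
    (hrs : r ≠ s) :
    {y | Adj pts (c ++ r :: List.replicate q s).length (P pts (c ++ r :: List.replicate q s) s) y}
      = ↑(((univ.erase s).image (P pts (c ++ r :: List.replicate q s)))
          ∪ ((univ.erase r).image (P pts (c ++ s :: List.replicate q r)))) := by
  have hlen12 : (c ++ r :: List.replicate q s).length
      = (c ++ s :: List.replicate q r).length := by simp
  have hx2 : P pts (c ++ r :: List.replicate q s) s
      = P pts (c ++ s :: List.replicate q r) r := P_swap c r s q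
  ext y
  simp only [Set.mem_setOf_eq, Finset.coe_union, Set.mem_union, Finset.coe_image,
    Set.mem_image, Finset.mem_coe, Finset.mem_erase, Finset.mem_univ, and_true]
  constructor
  · rintro hadj
    rw [adj_iff] at hadj
    obtain ⟨hxy, l', i₁, i₂, hlen', hx', hy'⟩ := hadj
    have hPeq : P pts l' i₁ = P pts (c ++ r :: List.replicate q s) s := hx'.symm
    rcases P_addr hpts (by simpa using hlen')
        hPeq with ⟨h1, h2⟩ | ⟨c', r', s', t', hr's', h1, h2, h3, h4⟩
    · left
      refine ⟨i₂, fun hi => hxy ?_, by rw [hy', h1]⟩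
      rw [hx', hy', h1, hi, ← h2]
    · -- h1 : l' = c' ++ r' :: rep t' s', h2 : i₁ = s',
      -- h3 : c ++ r :: rep q s = c' ++ s' :: rep t' r', h4 : s = r'
      rw [← h4] at h3
      have hs'ne : s' ≠ s := by rw [h4]; exact Ne.symm hr's'
      obtain ⟨hc, hrr, hqq⟩ := uniqDecomp q t' c c' r s' s hrs hs'ne h3
      right
      have hl' : l' = c ++ s :: List.replicate q r := by
        rw [h1, ← hc, ← hrr, ← h4, hqq]
      refine ⟨i₂, fun hi => hxy ?_, by rw [hy', hl']⟩
      rw [hy', hl', hi, ← hx2]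
  · rintro (⟨j, hj, rfl⟩ | ⟨j, hj, rfl⟩)
    · rw [adj_iff]
      refine ⟨fun hh => hj (P_index_inj hpts hh).symm, _, s, j, rfl, rfl, rfl⟩
    · rw [adj_iff]
      refine ⟨?_, _, r, j, hlen12.symm, hx2, rfl⟩
      rw [hx2]
      exact fun hh => hj (P_index_inj hpts hh).symm


lemma cell_disjoint (hpts : AffineIndependent ℝ pts) (c : List (Fin n)) {r s : Fin n} (q : ℕ)
    (hrs : r ≠ s) :
    Disjoint ((univ.erase s).image (P pts (c ++ r :: List.replicate q s)))
      ((univ.erase r).image (P pts (c ++ s :: List.replicate q r))) := by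
  rw [Finset.disjoint_left]
  rintro y hy1 hy2
  simp only [Finset.mem_image, Finset.mem_erase, Finset.mem_univ, and_true] at hy1 hy2
  obtain ⟨j, hj, rfl⟩ := hy1
  obtain ⟨j', hj', hPP⟩ := hy2
  have hPP' : P pts (c ++ r :: List.replicate q s) j = P pts (c ++ s :: List.replicate q r) j' :=
    hPP.symm
  rcases P_addr hpts (by simp) hPP' with ⟨h1, h2⟩ | ⟨c', r', s', t', hr's', e1, e2, e3, e4⟩
  · have := List.append_cancel_left h1
    injection this with hrr _
    exact hrs hrr
  · obtain ⟨-, -, hss', -⟩ := pairUnique hrs hr's' e1 e3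
    exact hj (e2.trans hss'.symm)

lemma lap_cell (hpts : AffineIndependent ℝ pts) (c : List (Fin n)) {r s : Fin n} (q : ℕ)
    (hrs : r ≠ s) (u : Amb n → ℝ) :
    lap pts (c ++ r :: List.replicate q s).length u (P pts (c ++ r :: List.replicate q s) s)
    = (∑ j ∈ univ.erase s, (u (P pts (c ++ r :: List.replicate q s) s)
        - u (P pts (c ++ r :: List.replicate q s) j)))
    + (∑ j ∈ univ.erase r, (u (P pts (c ++ r :: List.replicate q s) s)
        - u (P pts (c ++ s :: List.replicate q r) j))) := by
  unfold lap
  rw [cell_neighbors hpts c q hrs, finsum_mem_coe_finset,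
    Finset.sum_union (cell_disjoint hpts c q hrs),
    Finset.sum_image (fun a _ b _ h => P_index_inj hpts h),
    Finset.sum_image (fun a _ b _ h => P_index_inj hpts h)]


/-- Single-cell spectral algebra. -/
lemma cellAlg {n : ℕ} (hn : 2 ≤ n) (lam' : ℝ) (U : Fin n → ℝ) (M : Fin n → Fin n → ℝ)
    (hsym : ∀ j l, M j l = M l j) (hdiag : ∀ j, M j j = U j)
    (hraw : ∀ j l, j ≠ l →
      (∑ t ∈ univ.erase l, (M j l - M j t)) + (∑ t ∈ univ.erase j, (M j l - M l t))
        = lam' * M j l)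
    (s₀ : Fin n) :
    (2 - lam') * (2 * n - lam') * ((∑ t, M s₀ t) - U s₀)
      = (2 - lam') * ((n : ℝ) - 2) * (∑ t, M s₀ t) + (2 * n - lam') * (∑ j, U j) := by
  -- key equation: (2n - lam') M j l = (row j) + (row l) for j ≠ l
  have hkey : ∀ j l, j ≠ l →
      (2 * (n:ℝ) - lam') * M j l = (∑ t, M j t) + (∑ t, M l t) := by
    intro j l hjl
    have h1 : (∑ t ∈ univ.erase l, (M j l - M j t)) = ∑ t, (M j l - M j t) := by
      rw [Finset.sum_erase_eq_sub (mem_univ l)]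
      simp
    have h2 : (∑ t ∈ univ.erase j, (M j l - M l t)) = ∑ t, (M j l - M l t) := by
      rw [Finset.sum_erase_eq_sub (mem_univ j)]
      rw [hsym l j]
      simp
    have hr := hraw j l hjl
    rw [h1, h2, Finset.sum_sub_distrib, Finset.sum_sub_distrib, Finset.sum_const,
      Finset.card_univ, Fintype.card_fin, nsmul_eq_mul] at hr
    linarith [hr]
  have hcast : ((n - 1 : ℕ) : ℝ) = (n : ℝ) - 1 := by
    have h1 : 1 ≤ n := by omega
    push_cast [h1]
    ring
  -- (I) : row equation
  have hI : ∀ j, (2 * (n:ℝ) - lam') * ((∑ t, M j t) - U j)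
      = ((n:ℝ) - 2) * (∑ t, M j t) + ∑ t, (∑ t', M t t') := by
    intro j
    have hs : ∑ l ∈ univ.erase j, ((2 * (n:ℝ) - lam') * M j l)
        = ∑ l ∈ univ.erase j, ((∑ t, M j t) + (∑ t, M l t)) :=
      Finset.sum_congr rfl
        (fun l hl => hkey j l (fun hh => (Finset.mem_erase.1 hl).1 hh.symm))
    have hL : ∑ l ∈ univ.erase j, ((2 * (n:ℝ) - lam') * M j l)
        = (2 * (n:ℝ) - lam') * ((∑ t, M j t) - U j) := by
      rw [← Finset.mul_sum, Finset.sum_erase_eq_sub (mem_univ j), hdiag]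
    have hRs : ∑ l ∈ univ.erase j, ((∑ t, M j t) + (∑ t, M l t))
        = ((n:ℝ) - 1) * (∑ t, M j t) + ((∑ t, (∑ t', M t t')) - (∑ t, M j t)) := by
      rw [Finset.sum_add_distrib, Finset.sum_const, Finset.sum_erase_eq_sub (mem_univ j),
        Finset.card_erase_of_mem (mem_univ j), Finset.card_univ, Fintype.card_fin,
        nsmul_eq_mul, hcast]
    rw [hL, hRs] at hs
    linarith [hs]
  -- (II)
  have hII : (2 - lam') * (∑ t, (∑ t', M t t')) = (2 * (n:ℝ) - lam') * (∑ j, U j) := by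
    have hs : ∑ j, ((2 * (n:ℝ) - lam') * ((∑ t, M j t) - U j))
        = ∑ j, (((n:ℝ) - 2) * (∑ t, M j t) + ∑ t, (∑ t', M t t')) :=
      Finset.sum_congr rfl (fun j _ => hI j)
    have hL : ∑ j, ((2 * (n:ℝ) - lam') * ((∑ t, M j t) - U j))
        = (2 * (n:ℝ) - lam') * ((∑ t, (∑ t', M t t')) - (∑ j, U j)) := by
      rw [← Finset.mul_sum, Finset.sum_sub_distrib]
    have h3 : ∑ j, (((n:ℝ) - 2) * (∑ t, M j t) + ∑ t, (∑ t', M t t'))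
        = ((n:ℝ) - 2) * (∑ t, (∑ t', M t t')) + (n:ℝ) * (∑ t, (∑ t', M t t')) := by
      rw [Finset.sum_add_distrib, ← Finset.mul_sum, Finset.sum_const, Finset.card_univ,
        Fintype.card_fin, nsmul_eq_mul]
    rw [hL, h3] at hs
    nlinarith [hs]
  have hIs := hI s₀
  linear_combination (2 - lam') * hIs + hII


-- decomposition existence
lemma exists_decomp (l : List (Fin n)) (i : Fin n) :
    l = List.replicate l.length i ∨
      ∃ (a : List (Fin n)) (r : Fin n) (q : ℕ), r ≠ i ∧ l = a ++ r :: List.replicate q i := by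
  induction l using List.reverseRecOn with
  | nil => left; rfl
  | append_singleton l₀ b ih =>
    by_cases hb : b = i
    · rw [hb]
      rcases ih with hrep | ⟨a, r, q, hri, hdec⟩
      · left
        have hl : (l₀ ++ [i]).length = l₀.length + 1 := by simp
        rw [hl, List.replicate_succ', ← hrep]
      · right
        refine ⟨a, r, q + 1, hri, ?_⟩
        rw [hdec, List.replicate_succ', ← List.cons_append, ← List.append_assoc]
    · right
      exact ⟨l₀, b, 0, hb, by simp⟩

lemma erase_sum_conv {n : ℕ} (x0 : ℝ) (f : Fin n → ℝ) (s : Fin n) (hfs : f s = x0) :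
    ∑ t ∈ univ.erase s, (x0 - f t) = n * x0 - ∑ t, f t := by
  rw [Finset.sum_erase_eq_sub (Finset.mem_univ s), hfs, sub_self, sub_zero,
    Finset.sum_sub_distrib, Finset.sum_const, Finset.card_univ, Fintype.card_fin, nsmul_eq_mul]

lemma main_calc {n : ℕ} {pts : Fin n → Amb n} (hn : 2 ≤ n) (hpts : AffineIndependent ℝ pts)
    {m : ℕ} (hm : 1 ≤ m) {lam' : ℝ} (h2n : lam' ≠ 2 * n) {u : Amb n → ℝ}
    (hu : IsEigen pts m u lam')
    (a : List (Fin n)) (r s : Fin n) (q : ℕ) (hrs : r ≠ s)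
    (hlen : (a ++ r :: List.replicate q s).length = m - 1) :
    lap pts (m - 1) u (P pts (a ++ r :: List.replicate q s) s)
      = (((n : ℝ) + 2) * lam' - lam' ^ 2) * u (P pts (a ++ r :: List.replicate q s) s) := by
  -- the eigenvalue equation at any level-m cell pair
  have eigenC : ∀ (c : List (Fin n)) (r' s' : Fin n) (q' : ℕ), r' ≠ s' →
      (c ++ r' :: List.replicate q' s').length = m →
      (∑ t ∈ univ.erase s', (u (P pts (c ++ r' :: List.replicate q' s') s')
          - u (P pts (c ++ r' :: List.replicate q' s') t)))
      + (∑ t ∈ univ.erase r', (u (P pts (c ++ r' :: List.replicate q' s') s')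
          - u (P pts (c ++ s' :: List.replicate q' r') t)))
      = lam' * u (P pts (c ++ r' :: List.replicate q' s') s') := by
    intro c r' s' q' hr's' hlen'
    have hmem : P pts (c ++ r' :: List.replicate q' s') s' ∈ V pts m :=
      (mem_V_iff m _).2 ⟨_, s', hlen', rfl⟩
    have hnot : P pts (c ++ r' :: List.replicate q' s') s' ∉ V pts 0 := by
      rw [V_zero]; exact notMem_V0 hpts c q' hr's'
    have heig := hu _ ⟨hmem, hnot⟩
    rw [← hlen', lap_cell hpts c q' hr's' u] at heig
    exact heig
  -- rewrite the goal Laplacian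
  rw [show m - 1 = (a ++ r :: List.replicate q s).length from hlen.symm,
    lap_cell hpts a q hrs u]
  -- symmetry / diagonal facts for the two subcell matrices
  have hswap0 : ∀ (C : List (Fin n)) (j l : Fin n),
      P pts (C ++ [j]) l = P pts (C ++ [l]) j := by
    intro C j l
    have := P_swap (pts := pts) C j l 0
    simpa using this
  have hxB : P pts (a ++ s :: List.replicate q r) r
      = P pts (a ++ r :: List.replicate q s) s := (P_swap (pts := pts) a r s q).symm
  -- length facts
  simp only [List.length_append, List.length_cons, List.length_replicate] at hlen
  -- raw eigen equations inside the two subcells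
  have hrawA : ∀ j l : Fin n, j ≠ l →
      (∑ t ∈ univ.erase l, (u (P pts ((a ++ r :: List.replicate q s) ++ [j]) l)
          - u (P pts ((a ++ r :: List.replicate q s) ++ [j]) t)))
      + (∑ t ∈ univ.erase j, (u (P pts ((a ++ r :: List.replicate q s) ++ [j]) l)
          - u (P pts ((a ++ r :: List.replicate q s) ++ [l]) t)))
      = lam' * u (P pts ((a ++ r :: List.replicate q s) ++ [j]) l) := by
    intro j l hjl
    have h0 := eigenC (a ++ r :: List.replicate q s) j l 0 hjl
      (by simp only [List.length_append, List.length_cons, List.length_replicate]; omega)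
    simpa using h0
  have hrawB : ∀ j l : Fin n, j ≠ l →
      (∑ t ∈ univ.erase l, (u (P pts ((a ++ s :: List.replicate q r) ++ [j]) l)
          - u (P pts ((a ++ s :: List.replicate q r) ++ [j]) t)))
      + (∑ t ∈ univ.erase j, (u (P pts ((a ++ s :: List.replicate q r) ++ [j]) l)
          - u (P pts ((a ++ s :: List.replicate q r) ++ [l]) t)))
      = lam' * u (P pts ((a ++ s :: List.replicate q r) ++ [j]) l) := by
    intro j l hjl
    have h0 := eigenC (a ++ s :: List.replicate q r) j l 0 hjl
      (by simp only [List.length_append, List.length_cons, List.length_replicate]; omega)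
    simpa using h0
  -- the two cellAlg conclusions
  have hA : (2 - lam') * (2 * (n:ℝ) - lam')
        * ((∑ t, u (P pts ((a ++ r :: List.replicate q s) ++ [s]) t))
            - u (P pts (a ++ r :: List.replicate q s) s))
      = (2 - lam') * ((n : ℝ) - 2)
          * (∑ t, u (P pts ((a ++ r :: List.replicate q s) ++ [s]) t))
        + (2 * (n:ℝ) - lam') * (∑ j, u (P pts (a ++ r :: List.replicate q s) j)) :=
    cellAlg hn lam' (fun j => u (P pts (a ++ r :: List.replicate q s) j))
      (fun j l => u (P pts ((a ++ r :: List.replicate q s) ++ [j]) l))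
      (fun j l => by
        by_cases hjl : j = l
        · rw [hjl]
        · exact congrArg u (hswap0 _ j l))
      (fun j => congrArg u (P_snoc_self (pts := pts) _ j))
      hrawA s
  have hB : (2 - lam') * (2 * (n:ℝ) - lam')
        * ((∑ t, u (P pts ((a ++ s :: List.replicate q r) ++ [r]) t))
            - u (P pts (a ++ s :: List.replicate q r) r))
      = (2 - lam') * ((n : ℝ) - 2)
          * (∑ t, u (P pts ((a ++ s :: List.replicate q r) ++ [r]) t))
        + (2 * (n:ℝ) - lam') * (∑ j, u (P pts (a ++ s :: List.replicate q r) j)) :=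
    cellAlg hn lam' (fun j => u (P pts (a ++ s :: List.replicate q r) j))
      (fun j l => u (P pts ((a ++ s :: List.replicate q r) ++ [j]) l))
      (fun j l => by
        by_cases hjl : j = l
        · rw [hjl]
        · exact congrArg u (hswap0 _ j l))
      (fun j => congrArg u (P_snoc_self (pts := pts) _ j))
      hrawB r
  rw [hxB] at hB
  -- the eigen equation at x itself (level m)
  have e1 : a ++ r :: List.replicate (q + 1) s = (a ++ r :: List.replicate q s) ++ [s] := by
    rw [List.replicate_succ', ← List.cons_append, ← List.append_assoc]
  have e2 : a ++ s :: List.replicate (q + 1) r = (a ++ s :: List.replicate q r) ++ [r] := by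
    rw [List.replicate_succ', ← List.cons_append, ← List.append_assoc]
  have hIII := eigenC a r s (q + 1) hrs
    (by simp only [List.length_append, List.length_cons, List.length_replicate]; omega)
  rw [e1, e2, P_snoc_self (pts := pts)] at hIII
  have cIII1 : ∑ t ∈ univ.erase s, (u (P pts (a ++ r :: List.replicate q s) s)
        - u (P pts ((a ++ r :: List.replicate q s) ++ [s]) t))
      = (n:ℝ) * u (P pts (a ++ r :: List.replicate q s) s)
        - ∑ t, u (P pts ((a ++ r :: List.replicate q s) ++ [s]) t) :=
    erase_sum_conv _ _ s (congrArg u (P_snoc_self (pts := pts) _ s))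
  have cIII2 : ∑ t ∈ univ.erase r, (u (P pts (a ++ r :: List.replicate q s) s)
        - u (P pts ((a ++ s :: List.replicate q r) ++ [r]) t))
      = (n:ℝ) * u (P pts (a ++ r :: List.replicate q s) s)
        - ∑ t, u (P pts ((a ++ s :: List.replicate q r) ++ [r]) t) :=
    erase_sum_conv _ _ r (congrArg u ((P_snoc_self (pts := pts) _ r).trans hxB))
  rw [cIII1, cIII2] at hIII
  -- convert the goal sums
  have cG1 : ∑ j ∈ univ.erase s, (u (P pts (a ++ r :: List.replicate q s) s)
        - u (P pts (a ++ r :: List.replicate q s) j))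
      = (n:ℝ) * u (P pts (a ++ r :: List.replicate q s) s)
        - ∑ j, u (P pts (a ++ r :: List.replicate q s) j) :=
    erase_sum_conv _ _ s rfl
  have cG2 : ∑ j ∈ univ.erase r, (u (P pts (a ++ r :: List.replicate q s) s)
        - u (P pts (a ++ s :: List.replicate q r) j))
      = (n:ℝ) * u (P pts (a ++ r :: List.replicate q s) s)
        - ∑ j, u (P pts (a ++ s :: List.replicate q r) j) :=
    erase_sum_conv _ _ r (congrArg u hxB)
  rw [cG1, cG2]
  -- final algebra
  have h2n' : (2 * (n:ℝ) - lam') ≠ 0 := sub_ne_zero.2 (Ne.symm h2n)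
  have hsum : (2 * (n:ℝ) - lam')
        * ((∑ j, u (P pts (a ++ r :: List.replicate q s) j))
          + (∑ j, u (P pts (a ++ s :: List.replicate q r) j)))
      = (2 * (n:ℝ) - lam') * ((2 - lam') * ((n:ℝ) - lam')
          * u (P pts (a ++ r :: List.replicate q s) s)) := by
    linear_combination (-1 : ℝ) * hA - hB
      - ((2 - lam') * ((n:ℝ) + 2 - lam')) * hIII
  have hcancel := mul_left_cancel₀ h2n' hsum
  linear_combination (-1 : ℝ) * hcancel

end SD

/-- Spectral decimation, restriction direction. -/
theorem spectral_decimation_restriction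
    (n : ℕ) (hn : 2 ≤ n) (pts : Fin n → Amb n) (hpts : AffineIndependent ℝ pts)
    (m : ℕ) (hm : 1 ≤ m) (lam' : ℝ)
    (h2 : lam' ≠ 2) (hn2 : lam' ≠ (n : ℝ) + 2) (h2n : lam' ≠ 2 * n)
    (u : Amb n → ℝ)
    (hu : IsEigen pts m u lam') :
    IsEigen pts (m - 1) u (((n : ℝ) + 2) * lam' - lam' ^ 2) := by
  intro x hx
  obtain ⟨hxV, hxV0⟩ := hx
  rw [SD.mem_V_iff] at hxV
  obtain ⟨l, i, hlen, rfl⟩ := hxV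
  rcases SD.exists_decomp l i with hrep | ⟨a, r, q, hri, hdec⟩
  · exfalso
    apply hxV0
    rw [SD.V_zero]
    refine ⟨i, ?_⟩
    conv_rhs => rw [hrep]
    exact (SD.P_replicate pts l.length i).symm
  · subst hdec
    exact SD.main_calc hn hpts hm h2n hu a r i q hri hlen
end
end

section
/- Solution of the renormalization problem (paper's Theorem 5.2): Let m ≥ 1, let u : ℝ^{n−1} → ℝ be arbitrary, and let u' : ℝ^{n−1} → ℝ be its harmonic extension from V_{m−1} to V_m. Then E_m(u') = (n/(n+2)) · E_{m−1}(u). -/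
open Finset

noncomputable section

/-! Distinct vertices of `Γ_m` share at most one cell `f_w(V_0)`: comparing barycentric
coordinates with respect to the affinely independent `x_i`, two cells of the same level that
meet in two points coincide. Hence `E_m` is half the sum over all cells of the squared
differences between their vertices. A cell `f_a(V_0)` of level `m - 1` with vertex values `v`
splits into the subcells `f_{a k}(V_0)`, on which the harmonic extension takes the values
`subcellValue v k`; up to a constant these are `(v + (n v_k - ∑ v) δ_k) / (n + 2)`, so the energy
of the subcells is a quadratic expression in `∑ v_i` and `∑ v_i²`, and summing over `k` gives
`n / (n + 2)` times the energy of the cell. -/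

namespace Renormalization

section Algebra

variable {ι : Type*} [Fintype ι]

lemma sum_sum_sub_sq (f : ι → ℝ) :
    ∑ i, ∑ j, (f i - f j) ^ 2 = 2 * (Fintype.card ι * ∑ i, f i ^ 2 - (∑ i, f i) ^ 2) := by
  simp only [sub_sq, Finset.sum_add_distrib, Finset.sum_sub_distrib, Finset.sum_const,
    Finset.card_univ, nsmul_eq_mul, ← Finset.mul_sum, ← Finset.sum_mul]
  ring

variable [DecidableEq ι]

/-- `(v k + v i + ∑ v) / (N + 2)` is the paper's
`(2 (v k + v i) + ∑_{j ≠ k, i} v j) / (N + 2)`, with `N = card ι`. -/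
def subcellValue (v : ι → ℝ) (k i : ι) : ℝ :=
  if k = i then v k else (v k + v i + ∑ l, v l) / (Fintype.card ι + 2)

lemma subcellValue_eq (v : ι → ℝ) (k i : ι) :
    subcellValue v k i = (v i + (if i = k then Fintype.card ι * v k - ∑ l, v l else 0)
      + v k + ∑ l, v l) / (Fintype.card ι + 2) := by
  unfold subcellValue
  by_cases h : i = k
  · subst h
    simp only [if_true]
    field_simp
    ring
  · simp only [h, Ne.symm h, if_false]
    ring

lemma sum_sum_subcellValue_sub_sq (v : ι → ℝ) (k : ι) :
    ∑ i, ∑ j, (subcellValue v k i - subcellValue v k j) ^ 2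
      = (∑ i, ∑ j, (v i - v j) ^ 2
          + 2 * (Fintype.card ι + 1) * (Fintype.card ι * v k - ∑ l, v l) ^ 2)
        / (Fintype.card ι + 2) ^ 2 := by
  set F : ι → ℝ := fun i => v i + if i = k then Fintype.card ι * v k - ∑ l, v l else 0
  have hdiff : ∀ i j,
      subcellValue v k i - subcellValue v k j = (F i - F j) / (Fintype.card ι + 2) := by
    intro i j
    rw [subcellValue_eq, subcellValue_eq, ← sub_div]
    ring
  simp only [hdiff, div_pow, ← Finset.sum_div, sum_sum_sub_sq]
  simp only [F, add_sq, Finset.sum_add_distrib, mul_ite, ite_pow, mul_zero, ne_eq,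
    OfNat.ofNat_ne_zero, not_false_eq_true, zero_pow, Finset.sum_ite_eq', Finset.mem_univ, if_true]
  ring

lemma sum_sum_sum_subcellValue_sub_sq (v : ι → ℝ) :
    ∑ k, ∑ i, ∑ j, (subcellValue v k i - subcellValue v k j) ^ 2
      = Fintype.card ι / (Fintype.card ι + 2) * ∑ i, ∑ j, (v i - v j) ^ 2 := by
  simp only [sum_sum_subcellValue_sub_sq, ← Finset.sum_div, Finset.sum_add_distrib,
    ← Finset.mul_sum, sum_sum_sub_sq]
  have hdev : ∑ k, (Fintype.card ι * v k - ∑ l, v l) ^ 2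
      = Fintype.card ι * (Fintype.card ι * ∑ i, v i ^ 2 - (∑ i, v i) ^ 2) := by
    simp only [sub_sq, Finset.sum_sub_distrib, Finset.sum_add_distrib, mul_pow,
      ← Finset.mul_sum, ← Finset.sum_mul, Finset.sum_const, Finset.card_univ, nsmul_eq_mul]
    ring
  rw [hdev, Finset.sum_const, Finset.card_univ, nsmul_eq_mul]
  field_simp
  ring


lemma sum_filter_ne_and_ne {M : Type*} [AddCommGroup M]
    (g : ι → M) {r s : ι} (hrs : r ≠ s) :
    ∑ j ∈ Finset.univ.filter (fun j => j ≠ r ∧ j ≠ s), g j = ∑ j, g j - g r - g s := by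
  have hfilter : Finset.univ.filter (fun j => j ≠ r ∧ j ≠ s) = Finset.univ \ {r, s} := by
    ext j
    simp
  rw [hfilter, Finset.sum_sdiff_eq_sub (Finset.subset_univ _), Finset.sum_pair hrs, sub_sub]

end Algebra

section Cells

variable {n : ℕ}

def bary : List (Fin n) → Fin n → Fin n → ℝ
  | [], i, l => if i = l then 1 else 0
  | k :: L, i, l => (bary L i l + if k = l then 1 else 0) / 2

lemma bary_nonneg (L : List (Fin n)) (i l : Fin n) : 0 ≤ bary L i l := by
  induction L with
  | nil => unfold bary; split_ifs <;> norm_num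
  | cons k L ih => unfold bary; split_ifs <;> positivity

lemma sum_bary (L : List (Fin n)) (i : Fin n) : ∑ l, bary L i l = 1 := by
  induction L with
  | nil => simp [bary]
  | cons k L ih =>
    simp only [bary, ← Finset.sum_div, Finset.sum_add_distrib, ih, Finset.sum_ite_eq,
      Finset.mem_univ, if_true]
    norm_num

lemma bary_le_one (L : List (Fin n)) (i l : Fin n) : bary L i l ≤ 1 :=
  sum_bary L i ▸ Finset.single_le_sum (fun l _ => bary_nonneg L i l) (Finset.mem_univ l)

variable (pts : Fin n → Amb n)

lemma fList_pts_eq_sum_bary (L : List (Fin n)) (i : Fin n) :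
    fList pts L (pts i) = ∑ l, bary L i l • pts l := by
  induction L with
  | nil => simp [fList, bary]
  | cons k L ih =>
    simp only [fList, Function.comp_apply, fmap, ih, bary]
    have hk : pts k = ∑ l, (if k = l then (1 : ℝ) else 0) • pts l := by simp
    rw [hk, ← Finset.sum_add_distrib, Finset.smul_sum]
    refine Finset.sum_congr rfl fun l _ => ?_
    rw [← add_smul, smul_smul, div_eq_inv_mul]

variable {pts}

lemma bary_eq_of_fList_eq (hpts : AffineIndependent ℝ pts) {L L' : List (Fin n)}
    {i i' : Fin n} (h : fList pts L (pts i) = fList pts L' (pts i')) :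
    bary L i = bary L' i' := by
  refine (affineIndependent_iff_eq_of_fintype_affineCombination_eq ℝ pts).1 hpts _ _
    (sum_bary L i) (sum_bary L' i') ?_
  rw [Finset.affineCombination_eq_linear_combination _ _ _ (sum_bary L i),
    Finset.affineCombination_eq_linear_combination _ _ _ (sum_bary L' i'),
    ← fList_pts_eq_sum_bary, ← fList_pts_eq_sum_bary, h]

lemma fList_pts_eq_of_bary_eq_one {L : List (Fin n)} {i q : Fin n} (h : bary L i q = 1) :
    fList pts L (pts i) = pts q := by
  have hzero : ∀ l ≠ q, bary L i l = 0 := by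
    have hrest : ∑ l ∈ Finset.univ.erase q, bary L i l = 0 := by
      linarith [Finset.add_sum_erase Finset.univ (bary L i) (Finset.mem_univ q), sum_bary L i]
    intro l hl
    exact (Finset.sum_eq_zero_iff_of_nonneg fun l _ => bary_nonneg L i l).1 hrest l
      (Finset.mem_erase.2 ⟨hl, Finset.mem_univ l⟩)
  rw [fList_pts_eq_sum_bary,
    Finset.sum_eq_single q (fun l _ hl => by rw [hzero l hl, zero_smul])
      (fun hq => absurd (Finset.mem_univ q) hq), h, one_smul]

variable (pts) in
lemma fmap_injective (k : Fin n) : Function.Injective (fmap pts k) := by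
  intro x y h
  simpa [fmap] using h

variable (pts) in
lemma fList_injective (L : List (Fin n)) : Function.Injective (fList pts L) := by
  induction L with
  | nil => exact fun x y h => h
  | cons k L ih => exact (fmap_injective pts k).comp ih

lemma fList_pts_eq_of_fmap_eq_fmap (hpts : AffineIndependent ℝ pts) {p p' : Fin n}
    (hp : p ≠ p') {L L' : List (Fin n)} {i i' : Fin n}
    (h : fmap pts p (fList pts L (pts i)) = fmap pts p' (fList pts L' (pts i'))) :
    fList pts L (pts i) = pts p' := by
  -- the `p'`-th coordinate is at most `1/2` on the left and at least `1/2` on the right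
  have hw := congrFun (bary_eq_of_fList_eq hpts (L := p :: L) (L' := p' :: L') h) p'
  simp only [bary, hp, if_true, if_false] at hw
  refine fList_pts_eq_of_bary_eq_one (le_antisymm (bary_le_one L i p') ?_)
  linarith [bary_nonneg L' i' p']

lemma eq_of_two_common_vertices (hpts : AffineIndependent ℝ pts) :
    ∀ {L L' : List (Fin n)}, L.length = L'.length → ∀ {i j i' j' : Fin n},
    fList pts L (pts i) = fList pts L' (pts i') →
    fList pts L (pts j) = fList pts L' (pts j') →
    fList pts L (pts i) ≠ fList pts L (pts j) → L = L'
  | [], [], _, _, _, _, _, _, _, _ => rfl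
  | p :: L, p' :: L', hlen, i, j, i', j', hi, hj, hne => by
    by_cases hp : p = p'
    · subst hp
      have hi' := fmap_injective pts p hi
      have hj' := fmap_injective pts p hj
      rw [eq_of_two_common_vertices hpts (by simpa using hlen) hi' hj'
        fun h => hne (congrArg (fmap pts p) h)]
    · exact absurd (by simp only [fList, Function.comp_apply,
        fList_pts_eq_of_fmap_eq_fmap hpts hp hi, fList_pts_eq_of_fmap_eq_fmap hpts hp hj]) hne

lemma fWord_injective_pts {m : ℕ} (hpts : AffineIndependent ℝ pts) (w : Fin m → Fin n) :
    Function.Injective (fun i => fWord pts w (pts i)) :=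
  (fList_injective pts _).comp hpts.injective

lemma adj_iff (hpts : AffineIndependent ℝ pts) {m : ℕ} {x y : Amb n} :
    Adj pts m x y ↔ ∃ (w : Fin m → Fin n) (i j : Fin n), i ≠ j ∧
      fWord pts w (pts i) = x ∧ fWord pts w (pts j) = y := by
  constructor
  · rintro ⟨hne, w, ⟨_, ⟨i, rfl⟩, rfl⟩, ⟨_, ⟨j, rfl⟩, rfl⟩⟩
    exact ⟨w, i, j, fun h => hne (h ▸ rfl), rfl, rfl⟩
  · rintro ⟨w, i, j, hij, rfl, rfl⟩
    exact ⟨fun h => hij (fWord_injective_pts hpts w h), w, ⟨_, ⟨i, rfl⟩, rfl⟩,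
      ⟨_, ⟨j, rfl⟩, rfl⟩⟩

variable (pts) in
def cellEdge {m : ℕ} (t : (Fin m → Fin n) × Fin n × Fin n) : Amb n × Amb n :=
  (fWord pts t.1 (pts t.2.1), fWord pts t.1 (pts t.2.2))

lemma injOn_cellEdge (hpts : AffineIndependent ℝ pts) {m : ℕ} :
    Set.InjOn (cellEdge pts (m := m)) {t | t.2.1 ≠ t.2.2} := by
  rintro ⟨w, i, j⟩ hij ⟨w', i', j'⟩ - h
  obtain ⟨hi, hj⟩ := Prod.ext_iff.1 h
  obtain rfl : w = w' := List.ofFn_injective <| eq_of_two_common_vertices hpts (by simp) hi hj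
    fun h => hij (fWord_injective_pts hpts w h)
  obtain rfl : i = i' := fWord_injective_pts hpts w hi
  obtain rfl : j = j' := fWord_injective_pts hpts w hj
  rfl

lemma energy_eq_sum_cells (hpts : AffineIndependent ℝ pts) (m : ℕ) (u : Amb n → ℝ) :
    energy pts m u = (2 : ℝ)⁻¹ * ∑ w : Fin m → Fin n, ∑ i, ∑ j,
      (u (fWord pts w (pts i)) - u (fWord pts w (pts j))) ^ 2 := by
  have hedges : {p : Amb n × Amb n | Adj pts m p.1 p.2} =
      ↑((Finset.univ.filter fun t : (Fin m → Fin n) × Fin n × Fin n => t.2.1 ≠ t.2.2).image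
        (cellEdge pts)) := by
    ext ⟨x, y⟩
    simp [adj_iff hpts, cellEdge]
  rw [energy, hedges, finsum_mem_coe_finset,
    Finset.sum_image ((injOn_cellEdge hpts).mono fun t ht => by simpa using ht), Finset.sum_filter]
  congr 1
  simp only [Fintype.sum_prod_type, cellEdge]
  refine Finset.sum_congr rfl fun w _ => Finset.sum_congr rfl fun i _ =>
    Finset.sum_congr rfl fun j _ => ?_
  rw [ite_eq_left_iff, not_not]
  rintro rfl
  simp

lemma fList_append (L₁ L₂ : List (Fin n)) :
    fList pts (L₁ ++ L₂) = fList pts L₁ ∘ fList pts L₂ := by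
  induction L₁ with
  | nil => rfl
  | cons k L ih => simp only [List.cons_append, fList, ih, Function.comp_assoc]

lemma fWord_snoc {m : ℕ} (a : Fin m → Fin n) (k : Fin n) :
    fWord pts (Fin.snoc a k) = fWord pts a ∘ fmap pts k := by
  rw [fWord, fWord, List.ofFn_succ', List.concat_eq_append, fList_append]
  simp [fList]

lemma fWord_snoc_pts {m : ℕ} (a : Fin m → Fin n) (k i : Fin n) :
    fWord pts (Fin.snoc a k) (pts i) = xpt pts a k i := by
  rw [fWord_snoc, Function.comp_apply, fmap, add_comm, xpt]

lemma xpt_self {m : ℕ} (a : Fin m → Fin n) (j : Fin n) :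
    xpt pts a j j = fWord pts a (pts j) := by
  rw [xpt, ← two_smul ℝ (pts j), smul_smul, inv_mul_cancel₀ two_ne_zero, one_smul]

lemma apply_fWord_snoc_pts {m : ℕ} {u u' : Amb n → ℝ} {a : Fin m → Fin n}
    (hvertex : ∀ k, u' (fWord pts a (pts k)) = u (fWord pts a (pts k)))
    (hmid : ∀ r s : Fin n, r ≠ s →
      u' (xpt pts a r s) =
        (2 * (u (xpt pts a r r) + u (xpt pts a s s)) +
            ∑ j ∈ Finset.univ.filter (fun j => j ≠ r ∧ j ≠ s), u (xpt pts a j j)) /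
          ((n : ℝ) + 2))
    (k i : Fin n) :
    u' (fWord pts (Fin.snoc a k) (pts i))
      = subcellValue (fun l => u (fWord pts a (pts l))) k i := by
  rw [fWord_snoc_pts, subcellValue, Fintype.card_fin]
  split_ifs with hki
  · rw [← hki, xpt_self, hvertex]
  · rw [hmid k i hki, sum_filter_ne_and_ne _ hki]
    simp only [xpt_self]
    ring

end Cells

end Renormalization

open Renormalization

theorem renormalization_general
    (n : ℕ) (pts : Fin n → Amb n) (hpts : AffineIndependent ℝ pts)
    (m : ℕ) (hm : 1 ≤ m)
    (u u' : Amb n → ℝ)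
    (hagree : ∀ x ∈ V pts (m - 1), u' x = u x)
    (hharm : ∀ (a : Fin (m - 1) → Fin n) (r s : Fin n), r ≠ s →
      u' (xpt pts a r s) =
        (2 * (u (xpt pts a r r) + u (xpt pts a s s)) +
            ∑ j ∈ Finset.univ.filter (fun j => j ≠ r ∧ j ≠ s), u (xpt pts a j j)) /
          ((n : ℝ) + 2)) :
    energy pts m u' = ((n : ℝ) / ((n : ℝ) + 2)) * energy pts (m - 1) u := by
  obtain ⟨m, rfl⟩ : ∃ k, m = k + 1 := ⟨m - 1, by omega⟩
  rw [Nat.add_sub_cancel] at hagree hharm ⊢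
  have hsubcell : ∀ a k i, u' (fWord pts (Fin.snoc a k) (pts i))
      = subcellValue (fun l => u (fWord pts a (pts l))) k i := fun a =>
    apply_fWord_snoc_pts (fun k => hagree _ (Set.mem_iUnion.2 ⟨a, pts k, ⟨k, rfl⟩, rfl⟩))
      (hharm a)
  rw [energy_eq_sum_cells hpts, energy_eq_sum_cells hpts,
    ← (Fin.snocEquiv fun _ => Fin n).sum_comp, Fintype.sum_prod_type, Finset.sum_comm]
  simp only [Fin.snocEquiv, Equiv.coe_fn_mk, hsubcell, sum_sum_sum_subcellValue_sub_sq,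
    Fintype.card_fin, ← Finset.mul_sum]
  ring

/-- Solution of the renormalization problem: the harmonic extension multiplies
the graph energy by n/(n+2). -/
theorem renormalization
    (n : ℕ) (hn : 2 ≤ n) (pts : Fin n → Amb n) (hpts : AffineIndependent ℝ pts)
    (m : ℕ) (hm : 1 ≤ m)
    (u u' : Amb n → ℝ)
    (hagree : ∀ x ∈ V pts (m - 1), u' x = u x)
    (hharm : ∀ (a : Fin (m - 1) → Fin n) (r s : Fin n), r ≠ s →
      u' (xpt pts a r s) =
        (2 * (u (xpt pts a r r) + u (xpt pts a s s)) +
            ∑ j ∈ Finset.univ.filter (fun j => j ≠ r ∧ j ≠ s), u (xpt pts a j j)) /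
          ((n : ℝ) + 2)) :
    energy pts m u' = ((n : ℝ) / ((n : ℝ) + 2)) * energy pts (m - 1) u :=
  renormalization_general n pts hpts m hm u u' hagree hharm
end
end

section
/- Cell-sum identity (equation (2) of the paper): Let m ≥ 1, fix a word a ∈ (Fin n)^{m−1}, and suppose u : ℝ^{n−1} → ℝ is an eigenfunction of Δ_m with eigenvalue λ. Then (2 − λ) · ∑_{unordered pairs {r,s}, r ≠ s} u(x_{r,s}) = (n − 1) · ∑_{j<n} u(x_{j,j}). -/
open Finset

noncomputable section

/-!
Barycentric coordinates with respect to the simplex `x_0, …, x_{n-1}` show that, for `r ≠ s`,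
the point `x_{r,s}` lies in exactly two cells of level `m`, namely `f_{a r}(V_0)` and
`f_{a s}(V_0)`: reading a word from the left, `f_i` raises the `i`-th coordinate to at least
`1/2`, while every coordinate of `x_{r,s}` stays below `1`. Hence `x_{r,s} ∉ V_0`, and its
neighbours are the points `x_{r,t}`, `x_{s,t}`. Writing `g r s = u(x_{r,s})`, the eigenvalue
equation at `x_{r,s}` becomes `2n g r s - ∑_t g r t - ∑_t g s t = λ g r s`; summing over all
ordered pairs `r ≠ s` and splitting `∑_{r,s} g r s = 2 ∑_{r<s} g r s + ∑_j g j j` gives the identity.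
-/

variable {n : ℕ}

lemma fmap_injective (pts : Fin n → Amb n) (i : Fin n) : Function.Injective (fmap pts i) := by
  intro x y h
  simpa [fmap] using h

lemma fList_injective (pts : Fin n → Amb n) (l : List (Fin n)) :
    Function.Injective (fList pts l) := by
  induction l with
  | nil => exact Function.injective_id
  | cons i l ih => exact (fmap_injective pts i).comp ih

lemma fList_append (pts : Fin n → Amb n) (l l' : List (Fin n)) (x : Amb n) :
    fList pts (l ++ l') x = fList pts l (fList pts l' x) := by
  induction l with
  | nil => rfl
  | cons i l ih => exact congrArg (fmap pts i) ih

lemma xpt_comm (pts : Fin n → Amb n) {k : ℕ} (a : Fin k → Fin n) (r s : Fin n) :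
    xpt pts a r s = xpt pts a s r := by
  rw [xpt, xpt, add_comm]

lemma List.ofFn_snoc {α : Type*} {k : ℕ} (a : Fin k → α) (r : α) :
    List.ofFn (Fin.snoc a r : Fin (k + 1) → α) = List.ofFn a ++ [r] := by
  rw [List.ofFn_succ']
  simp

lemma fWord_snoc (pts : Fin n → Amb n) {k : ℕ} (a : Fin k → Fin n) (r q : Fin n) :
    fWord pts (Fin.snoc a r : Fin (k + 1) → Fin n) (pts q) = xpt pts a r q := by
  rw [fWord, List.ofFn_snoc, fList_append]
  simp [xpt, fWord, fList, fmap, add_comm]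

section Coordinates

variable (b : AffineBasis (Fin n) ℝ (Amb n))

lemma coord_half_add (j : Fin n) (x y : Amb n) :
    b.coord j ((2 : ℝ)⁻¹ • (x + y)) = (b.coord j x + b.coord j y) / 2 := by
  have : (2 : ℝ)⁻¹ • (x + y) = AffineMap.lineMap x y (2⁻¹ : ℝ) := by
    rw [AffineMap.lineMap_apply_module]; module
  rw [this, AffineMap.apply_lineMap, AffineMap.lineMap_apply_ring']
  ring

lemma coord_fmap (i j : Fin n) (x : Amb n) :
    b.coord j (fmap b i x) = (b.coord j x + if j = i then 1 else 0) / 2 := by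
  rw [fmap, coord_half_add, b.coord_apply]

lemma half_add_basis_eq_iff {p q r s : Fin n} :
    (2 : ℝ)⁻¹ • (b p + b q) = (2 : ℝ)⁻¹ • (b r + b s) ↔ p = r ∧ q = s ∨ p = s ∧ q = r := by
  constructor
  · intro h
    have hc : ∀ j, b.coord j ((2 : ℝ)⁻¹ • (b p + b q)) = b.coord j ((2 : ℝ)⁻¹ • (b r + b s)) :=
      fun j => by rw [h]
    simp only [coord_half_add, b.coord_apply] at hc
    have hp : p = r ∨ p = s := by
      have := hc p
      by_contra! h'
      simp only [if_true, if_neg h'.1, if_neg h'.2] at this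
      split_ifs at this <;> linarith
    rcases hp with rfl | rfl
    · refine Or.inl ⟨rfl, ?_⟩
      by_contra hqs
      have := hc q
      simp only [if_true, if_neg hqs] at this
      split_ifs at this <;> linarith
    · refine Or.inr ⟨rfl, ?_⟩
      by_contra hqr
      have := hc q
      simp only [if_true, if_neg hqr] at this
      split_ifs at this <;> linarith
  · rintro (⟨rfl, rfl⟩ | ⟨rfl, rfl⟩)
    · rfl
    · rw [add_comm]

lemma coord_fList_nonneg {x : Amb n} (hx : ∀ j, 0 ≤ b.coord j x) (l : List (Fin n)) (j : Fin n) :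
    0 ≤ b.coord j (fList b l x) := by
  induction l with
  | nil => exact hx j
  | cons i l ih =>
    show 0 ≤ b.coord j (fmap b i (fList b l x))
    rw [coord_fmap]
    split_ifs <;> linarith

lemma coord_fList_lt_one {x : Amb n} (hx : ∀ j, b.coord j x < 1) (l : List (Fin n)) (j : Fin n) :
    b.coord j (fList b l x) < 1 := by
  induction l with
  | nil => exact hx j
  | cons i l ih =>
    show b.coord j (fmap b i (fList b l x)) < 1
    rw [coord_fmap]
    split_ifs <;> linarith

lemma coord_basis_nonneg (p j : Fin n) : 0 ≤ b.coord j (b p) := by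
  rw [b.coord_apply]; split_ifs <;> norm_num

lemma coord_half_add_lt_one {r s : Fin n} (hrs : r ≠ s) (j : Fin n) :
    b.coord j ((2 : ℝ)⁻¹ • (b r + b s)) < 1 := by
  rw [coord_half_add, b.coord_apply, b.coord_apply]
  split_ifs <;> simp_all <;> norm_num

/-- The `i`-th coordinate of `f_i x` is at least `1/2`, while that of `f_{i'} y` is below `1/2`
when `i' ≠ i`. -/
lemma eq_of_fmap_eq_fmap {x y : Amb n} (hx : ∀ j, 0 ≤ b.coord j x) (hy : ∀ j, b.coord j y < 1)
    {i i' : Fin n} (h : fmap b i x = fmap b i' y) : i = i' ∧ x = y := by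
  have hi : i = i' := by
    by_contra hii'
    have := congrArg (b.coord i) h
    rw [coord_fmap, coord_fmap, if_pos rfl, if_neg hii'] at this
    linarith [hx i, hy i]
  subst hi
  exact ⟨rfl, fmap_injective b i h⟩

lemma eq_append_of_fList_eq_fList_half_add {r s : Fin n} (hrs : r ≠ s) {l l' : List (Fin n)}
    (hl : l.length = l'.length + 1) {p : Fin n}
    (h : fList b l (b p) = fList b l' ((2 : ℝ)⁻¹ • (b r + b s))) :
    l = l' ++ [r] ∧ p = s ∨ l = l' ++ [s] ∧ p = r := by
  induction l' generalizing l with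
  | nil =>
    rcases l with _ | ⟨i, _ | _⟩ <;> simp at hl
    change (2 : ℝ)⁻¹ • (b p + b i) = (2 : ℝ)⁻¹ • (b r + b s) at h
    rcases (half_add_basis_eq_iff b).1 h with ⟨rfl, rfl⟩ | ⟨rfl, rfl⟩ <;> simp
  | cons i' l' ih =>
    rcases l with _ | ⟨i, l⟩
    · simp at hl
    obtain ⟨rfl, htail⟩ := eq_of_fmap_eq_fmap b (coord_fList_nonneg b (coord_basis_nonneg b p) l)
      (coord_fList_lt_one b (coord_half_add_lt_one b hrs) l') h
    rcases ih (by simpa using hl) htail with ⟨rfl, rfl⟩ | ⟨rfl, rfl⟩ <;> simp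

variable {k : ℕ} (a : Fin k → Fin n)

lemma fWord_basis_eq_xpt_iff (w : Fin (k + 1) → Fin n)
    {r s : Fin n} (hrs : r ≠ s) (p : Fin n) :
    fWord b w (b p) = xpt b a r s ↔ w = Fin.snoc a r ∧ p = s ∨ w = Fin.snoc a s ∧ p = r := by
  constructor
  · intro h
    simpa only [← List.ofFn_inj, List.ofFn_snoc] using
      eq_append_of_fList_eq_fList_half_add b hrs (l := List.ofFn w) (by simp) h
  · rintro (⟨rfl, rfl⟩ | ⟨rfl, rfl⟩)
    · exact fWord_snoc b a r p
    · rw [fWord_snoc, xpt_comm]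

lemma xpt_mem_V_diff_V_zero {r s : Fin n} (hrs : r ≠ s) :
    xpt b a r s ∈ V b (k + 1) \ V b 0 := by
  refine ⟨Set.mem_iUnion.2 ⟨Fin.snoc a r, b s, ⟨s, rfl⟩, fWord_snoc b a r s⟩, ?_⟩
  rintro ⟨_, ⟨w, rfl⟩, _, ⟨j, rfl⟩, hj⟩
  have hlt : b.coord j (xpt b a r s) < 1 :=
    coord_fList_lt_one b (coord_half_add_lt_one b hrs) (List.ofFn a) j
  have hw : fWord b w (b j) = b j := by simp [fWord, fList]
  rw [← hj, hw, b.coord_apply_eq] at hlt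
  exact lt_irrefl _ hlt

lemma xpt_injective (r : Fin n) : Function.Injective (xpt b a r) := by
  intro t t' h
  rcases (half_add_basis_eq_iff b).1 (fList_injective b _ h) with ⟨-, h⟩ | ⟨rfl, rfl⟩
  exacts [h, rfl]

lemma xpt_ne_xpt {r s t : Fin n} (hrs : r ≠ s) (hts : t ≠ s) (t' : Fin n) :
    xpt b a r t ≠ xpt b a s t' := by
  intro h
  rcases (half_add_basis_eq_iff b).1 (fList_injective b _ h) with ⟨h, -⟩ | ⟨-, h⟩
  exacts [hrs h, hts h]

lemma setOf_adj_xpt [DecidableEq (Amb n)] {r s : Fin n} (hrs : r ≠ s) :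
    {y | Adj b (k + 1) (xpt b a r s) y} =
      ↑((univ.erase s).image (xpt b a r) ∪ (univ.erase r).image (xpt b a s)) := by
  ext y
  simp only [Set.mem_ofPred_eq, Adj, coe_union, coe_image, coe_erase, coe_univ, Set.mem_union,
    Set.mem_image, Set.mem_sdiff, Set.mem_univ, Set.mem_singleton_iff, true_and]
  constructor
  · rintro ⟨hne, w, ⟨_, ⟨p, rfl⟩, hp⟩, ⟨_, ⟨q, rfl⟩, rfl⟩⟩
    rcases (fWord_basis_eq_xpt_iff b a w hrs p).1 hp with ⟨rfl, -⟩ | ⟨rfl, -⟩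
    · refine Or.inl ⟨q, fun hq => hne ?_, (fWord_snoc b a r q).symm⟩
      rw [fWord_snoc, hq]
    · refine Or.inr ⟨q, fun hq => hne ?_, (fWord_snoc b a s q).symm⟩
      rw [fWord_snoc, hq, xpt_comm]
  · rintro (⟨t, hts, rfl⟩ | ⟨t, htr, rfl⟩)
    · refine ⟨fun h => hts (xpt_injective b a r h).symm, Fin.snoc a r,
        ⟨b s, ⟨s, rfl⟩, fWord_snoc b a r s⟩, ⟨b t, ⟨t, rfl⟩, fWord_snoc b a r t⟩⟩
    · refine ⟨fun h => htr (xpt_injective b a s ((xpt_comm b a r s).symm.trans h)).symm,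
        Fin.snoc a s, ⟨b r, ⟨r, rfl⟩, (fWord_snoc b a s r).trans (xpt_comm b a s r)⟩,
        ⟨b t, ⟨t, rfl⟩, fWord_snoc b a s t⟩⟩

/-- The sums may run over all `t`: the extra terms `t = s` and `t = r` are `u x - u x = 0`. -/
lemma lap_xpt (u : Amb n → ℝ) {r s : Fin n} (hrs : r ≠ s) :
    lap b (k + 1) u (xpt b a r s) =
      ∑ t, (u (xpt b a r s) - u (xpt b a r t)) + ∑ t, (u (xpt b a r s) - u (xpt b a s t)) := by
  classical
  have hdisj : Disjoint ((univ.erase s).image (xpt b a r)) ((univ.erase r).image (xpt b a s)) := by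
    simp only [disjoint_left, mem_image, mem_erase, mem_univ, and_true, not_exists, not_and]
    rintro _ ⟨t, hts, rfl⟩ t' -
    exact (xpt_ne_xpt b a hrs hts t').symm
  rw [lap, setOf_adj_xpt b a hrs, finsum_mem_coe_finset, sum_union hdisj,
    sum_image fun t _ t' _ h => xpt_injective b a r h,
    sum_image fun t _ t' _ h => xpt_injective b a s h,
    sum_erase univ (sub_self _), sum_erase univ (by rw [xpt_comm, sub_self])]

end Coordinates

section PairSums

variable {ι : Type*} [Fintype ι] [LinearOrder ι]

lemma sum_sum_eq_two_mul_sum_lt_add_sum_diag {R : Type*} [NonAssocSemiring R] {g : ι → ι → R}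
    (hg : ∀ r s, g r s = g s r) :
    ∑ r, ∑ s, g r s = 2 * ∑ r, ∑ s ∈ univ.filter (fun s => r < s), g r s + ∑ j, g j j := by
  have hsplit : ∀ r s, g r s =
      ((if r < s then g r s else 0) + if s < r then g s r else 0) + if r = s then g r s else 0 := by
    intro r s
    rcases lt_trichotomy r s with h | rfl | h
    · simp [h, h.not_gt, h.ne]
    · simp
    · simp [h, h.not_gt, h.ne', hg r s]
  simp only [sum_filter, two_mul]
  rw [sum_congr rfl fun r _ => sum_congr rfl fun s _ => hsplit r s]
  simp only [sum_add_distrib, sum_ite_eq]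
  rw [sum_comm (f := fun r s => if s < r then g s r else 0)]
  simp

lemma two_sub_mul_sum_lt_eq_of_laplace_eq {g : ι → ι → ℝ} (hg : ∀ r s, g r s = g s r) {lam : ℝ}
    (h : ∀ r s, r ≠ s → ∑ t, (g r s - g r t) + ∑ t, (g r s - g s t) = lam * g r s) :
    (2 - lam) * ∑ r, ∑ s ∈ univ.filter (fun s => r < s), g r s =
      ((Fintype.card ι : ℝ) - 1) * ∑ j, g j j := by
  set D : ι → ι → ℝ := fun r s => ∑ t, (g r s - g r t) + ∑ t, (g r s - g s t) - lam * g r s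
  have hoff : ∑ r, ∑ s, D r s = ∑ r, D r r :=
    sum_congr rfl fun r _ => sum_eq_single r (fun s _ hs => sub_eq_zero.2 (h r s hs.symm))
      (by simp)
  have hpairs := sum_sum_eq_two_mul_sum_lt_add_sum_diag hg
  simp only [D, sum_sub_distrib, sum_add_distrib, sum_const, card_univ, nsmul_eq_mul,
    ← mul_sum] at hoff
  linear_combination hoff / 2 - (2 - lam) / 2 * hpairs

end PairSums

/-- Cell-sum identity (equation (2)). -/
theorem cell_sum_identity
    (n : ℕ) (hn : 2 ≤ n) (pts : Fin n → Amb n) (hpts : AffineIndependent ℝ pts)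
    (m : ℕ) (hm : 1 ≤ m) (a : Fin (m - 1) → Fin n) (lam : ℝ)
    (u : Amb n → ℝ) (hu : IsEigen pts m u lam) :
    (2 - lam) * (∑ r : Fin n, ∑ s ∈ Finset.univ.filter (fun s => r < s), u (xpt pts a r s)) =
      ((n : ℝ) - 1) * ∑ j : Fin n, u (xpt pts a j j) := by
  obtain ⟨k, rfl⟩ : ∃ k, m = k + 1 := ⟨m - 1, by omega⟩
  have hspan : affineSpan ℝ (Set.range pts) = ⊤ :=
    hpts.affineSpan_eq_top_iff_card_eq_finrank_add_one.2 (by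
      rw [Fintype.card_fin, finrank_euclideanSpace_fin]; omega)
  obtain ⟨b, rfl⟩ : ∃ b : AffineBasis (Fin n) ℝ (Amb n), ⇑b = pts := ⟨⟨pts, hpts, hspan⟩, rfl⟩
  have h := two_sub_mul_sum_lt_eq_of_laplace_eq (g := fun r s => u (xpt b a r s))
    (fun r s => by rw [xpt_comm]) fun r s hrs => by
      rw [← lap_xpt b a u hrs]
      exact hu _ (xpt_mem_V_diff_V_zero b a hrs)
  rwa [Fintype.card_fin] at h
end
end

section
/- The G-sum formula (equation (3) of the paper): Let m ≥ 1, fix a word a ∈ (Fin n)^{m−1} and indices a₀ ≠ b₀ with a₀, b₀ < n, and suppose u : ℝ^{n−1} → ℝ is an eigenfunction of Δ_m with eigenvalue λ ≠ 2. Then ∑_{x_{i,j} ∈ G_{a₀,b₀}} u(x_{i,j}) = u(x_{a₀,a₀}) + u(x_{b₀,b₀}) − (2n − 1 − λ)·u(x_{a₀,b₀}) + ((n−1)/(2−λ)) · ∑_{j<n} u(x_{j,j}). -/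
open Finset

noncomputable section

namespace GSum

lemma smul_eq_midpoint {n : ℕ} (x y : Amb n) : (2 : ℝ)⁻¹ • (x + y) = midpoint ℝ x y := by
  rw [midpoint_eq_smul_add, invOf_eq_inv]

variable {n : ℕ} (pts : Fin n → Amb n)

lemma fmap_eq_midpoint (i : Fin n) (x : Amb n) : fmap pts i x = midpoint ℝ x (pts i) :=
  smul_eq_midpoint _ _

lemma fList_append (l₁ l₂ : List (Fin n)) (x : Amb n) :
    fList pts (l₁ ++ l₂) x = fList pts l₁ (fList pts l₂ x) := by
  induction l₁ with
  | nil => rfl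
  | cons i t ih => simp [fList, ih]

lemma fmap_injective (i : Fin n) : Function.Injective (fmap pts i) := by
  intro x y h
  have h2 : (2:ℝ) • ((2:ℝ)⁻¹ • (x + pts i)) = (2:ℝ) • ((2:ℝ)⁻¹ • (y + pts i)) :=
    congrArg ((2:ℝ) • ·) h
  rw [smul_inv_smul₀ (by norm_num), smul_inv_smul₀ (by norm_num)] at h2
  exact add_right_cancel h2

lemma fList_injective (l : List (Fin n)) : Function.Injective (fList pts l) := by
  induction l with
  | nil => exact fun x y h => h
  | cons i t ih => exact fun x y h => ih (fmap_injective pts i h)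

lemma V_zero : V pts 0 = Set.range pts := by
  ext x
  simp only [V, Set.mem_iUnion]
  constructor
  · rintro ⟨w, y, hy, rfl⟩
    have : fWord pts w = id := by
      unfold fWord
      rw [List.ofFn_zero]
      rfl
    rw [this]; exact hy
  · intro hx
    exact ⟨Fin.elim0, x, hx, by unfold fWord; rw [List.ofFn_zero]; rfl⟩

lemma mem_V_of_list (l : List (Fin n)) (k : Fin n) :
    fList pts l (pts k) ∈ V pts l.length := by
  refine Set.mem_iUnion.2 ⟨l.get, pts k, Set.mem_range_self k, ?_⟩
  unfold fWord
  rw [List.ofFn_get]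

lemma exists_ofFn {m : ℕ} (l : List (Fin n)) (hl : l.length = m) :
    ∃ w : Fin m → Fin n, List.ofFn w = l := by
  subst hl
  exact ⟨l.get, List.ofFn_get l⟩


variable (b : AffineBasis (Fin n) ℝ (Amb n))

lemma coord_fmap (t i : Fin n) (x : Amb n) :
    b.coord t (fmap (⇑b) i x) = (b.coord t x + if t = i then 1 else 0) / 2 := by
  rw [fmap_eq_midpoint, (b.coord t).map_midpoint, midpoint_eq_smul_add, invOf_eq_inv,
    b.coord_apply, smul_eq_mul]
  ring

lemma coord_mid (t p q : Fin n) :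
    b.coord t (midpoint ℝ (b p) (b q)) =
      ((if t = p then 1 else 0) + (if t = q then 1 else 0)) / 2 := by
  rw [(b.coord t).map_midpoint, midpoint_eq_smul_add, invOf_eq_inv,
    b.coord_apply, b.coord_apply, smul_eq_mul]
  ring

lemma coord_fList_nonneg (l : List (Fin n)) (x : Amb n) (hx : ∀ t, 0 ≤ b.coord t x)
    (t : Fin n) : 0 ≤ b.coord t (fList (⇑b) l x) := by
  induction l with
  | nil => exact hx t
  | cons i l ih =>
      show 0 ≤ b.coord t (fmap (⇑b) i (fList (⇑b) l x))
      rw [coord_fmap]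
      have := ih
      positivity

lemma coord_fList_pos (l : List (Fin n)) (x : Amb n) (hx : ∀ t, 0 ≤ b.coord t x)
    (t : Fin n) (ht : 0 < b.coord t x) : 0 < b.coord t (fList (⇑b) l x) := by
  induction l with
  | nil => exact ht
  | cons i l ih =>
      show 0 < b.coord t (fmap (⇑b) i (fList (⇑b) l x))
      rw [coord_fmap]
      have h2 : (0:ℝ) ≤ if t = i then 1 else 0 := by positivity
      linarith

lemma coord_le_one (x : Amb n) (hx : ∀ t, 0 ≤ b.coord t x) (t : Fin n) :
    b.coord t x ≤ 1 := by
  have h := b.sum_coord_apply_eq_one x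
  calc b.coord t x ≤ ∑ i, b.coord i x :=
        Finset.single_le_sum (fun i _ => hx i) (Finset.mem_univ t)
    _ = 1 := h

lemma mid_nonneg (p q t : Fin n) : 0 ≤ b.coord t (midpoint ℝ (b p) (b q)) := by
  rw [coord_mid]; positivity

/-- key address uniqueness lemma -/
lemma addr (r s : Fin n) (hrs : r ≠ s) :
    ∀ (la l : List (Fin n)) (k : Fin n), l.length = la.length + 1 →
    fList (⇑b) l (b k) = fList (⇑b) la (midpoint ℝ (b r) (b s)) →
    (l = la ++ [r] ∧ k = s) ∨ (l = la ++ [s] ∧ k = r) := by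
  intro la
  induction la with
  | nil =>
      intro l k hl heq
      match l, hl with
      | [i], _ =>
        have h := fun t => congrArg (b.coord t) heq
        simp only [fList, Function.comp_apply, id_eq] at h
        have hr := h r
        have hs := h s
        rw [coord_fmap, coord_mid, b.coord_apply] at hr hs
        simp only [if_pos rfl, if_true, if_neg hrs, if_neg (Ne.symm hrs)] at hr hs
        by_cases hir : i = r
        · subst hir
          simp only [if_pos rfl] at hs hr
          have hks : k = s := by
            by_cases h' : s = k
            · exact h'.symm
            · simp [if_neg h', if_neg (fun h'' : s = i => hrs (h''.symm))] at hs
          exact Or.inl ⟨rfl, hks⟩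
        · have hkr : r = k := by
            by_contra h'
            simp [if_neg h', if_neg (fun h'' : r = i => hir h''.symm)] at hr
          have his : i = s := by
            by_contra h'
            have : ¬ (s = i) := fun h'' => h' h''.symm
            have hsk : ¬ (s = k) := by
              intro h''
              exact hrs (hkr.trans h''.symm)
            simp [if_neg this, if_neg hsk] at hs
          exact Or.inr ⟨by rw [his]; rfl, hkr.symm⟩
  | cons a0 la ih =>
      intro l k hl heq
      match l, hl with
      | i :: l', hl =>
        have hl' : l'.length = la.length + 1 := by
          simpa using hl
        simp only [fList, Function.comp_apply] at heq
        set x := fList (⇑b) l' (b k) with hxdef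
        set y := fList (⇑b) la (midpoint ℝ (b r) (b s)) with hydef
        have hynn : ∀ t, 0 ≤ b.coord t y := fun t =>
          coord_fList_nonneg b la _ (mid_nonneg b r s) t
        have hia : i = a0 := by
          by_contra hne
          have hco := congrArg (b.coord i) heq
          rw [coord_fmap, coord_fmap] at hco
          simp only [if_pos rfl, if_true, if_neg hne] at hco
          -- (coord i x + 1)/2 = (coord i y + 0)/2
          have hxnn : (0:ℝ) ≤ b.coord i x :=
            coord_fList_nonneg b l' _ (fun t => by
              rw [b.coord_apply]; positivity) i
          have hy1 : b.coord i y = b.coord i x + 1 := by linarith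
          have hyle : b.coord i y ≤ 1 := coord_le_one b y hynn i
          have hyeq1 : b.coord i y = 1 := by linarith
          -- but some other coordinate of y is positive
          obtain ⟨t, hti, htpos⟩ : ∃ t, t ≠ i ∧ 0 < b.coord t y := by
            by_cases hir : i = r
            · refine ⟨s, fun h => hrs (hir ▸ h.symm ▸ rfl), ?_⟩
              refine coord_fList_pos b la _ (mid_nonneg b r s) s ?_
              rw [coord_mid]
              simp [if_neg (Ne.symm hrs)]
            · refine ⟨r, fun h => hir (h.symm), ?_⟩
              refine coord_fList_pos b la _ (mid_nonneg b r s) r ?_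
              rw [coord_mid]
              simp [if_neg hrs]
          have hsum := b.sum_coord_apply_eq_one y
          have hle : b.coord i y + b.coord t y ≤ ∑ j, b.coord j y :=
            calc b.coord i y + b.coord t y
                = ∑ j ∈ ({i, t} : Finset (Fin n)), b.coord j y :=
                  (Finset.sum_pair (f := fun j => b.coord j y) (Ne.symm hti)).symm
              _ ≤ ∑ j, b.coord j y :=
                  Finset.sum_le_sum_of_subset_of_nonneg
                    (Finset.subset_univ _) (fun j _ _ => hynn j)
          rw [hsum, hyeq1] at hle
          linarith
        subst hia
        have hxy : x = y := fmap_injective (⇑b) i heq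
        exact (ih l' k hl' hxy).elim
          (fun ⟨h1, h2⟩ => Or.inl ⟨by rw [h1]; rfl, h2⟩)
          (fun ⟨h1, h2⟩ => Or.inr ⟨by rw [h1]; rfl, h2⟩)


lemma xpt_eq_fList {m' : ℕ} (a : Fin m' → Fin n) (i j : Fin n) :
    xpt (⇑b) a i j = fList (⇑b) (List.ofFn a) (midpoint ℝ (b i) (b j)) := by
  unfold xpt fWord
  rw [smul_eq_midpoint]

lemma fList_append_single {m' : ℕ} (a : Fin m' → Fin n) (i j : Fin n) :
    fList (⇑b) (List.ofFn a ++ [i]) (b j) = xpt (⇑b) a i j := by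
  rw [fList_append, xpt_eq_fList]
  show fList (⇑b) (List.ofFn a) (fmap (⇑b) i (b j)) = _
  rw [fmap_eq_midpoint, midpoint_comm]

lemma mid_eq_iff (p q p' q' : Fin n) :
    midpoint ℝ (b p) (b q) = midpoint ℝ (b p') (b q') ↔
      (p = p' ∧ q = q') ∨ (p = q' ∧ q = p') := by
  constructor
  · intro h
    have hc : ∀ t : Fin n, ((if t = p then (1:ℝ) else 0) + (if t = q then 1 else 0)) =
        ((if t = p' then 1 else 0) + (if t = q' then 1 else 0)) := by
      intro t
      have h2 := congrArg (b.coord t) h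
      rw [coord_mid, coord_mid] at h2
      linarith
    by_cases hpp : p = p'
    · left
      refine ⟨hpp, ?_⟩
      have h1 := hc q
      rw [if_pos rfl, hpp] at h1
      by_contra hqq
      rw [if_neg hqq] at h1
      by_cases h2 : q = p' <;> simp [h2] at h1
    · right
      have h1 := hc p
      rw [if_pos rfl, if_neg hpp] at h1
      have hpq' : p = q' := by
        by_contra h2
        rw [if_neg h2] at h1
        by_cases h3 : p = q <;> simp [h3] at h1
      refine ⟨hpq', ?_⟩
      have h2 := hc q
      rw [if_pos rfl] at h2
      by_contra hqp'
      rw [if_neg hqp'] at h2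
      by_cases h3 : q = q'
      · rw [if_pos h3] at h2
        have h4 : q = p := h3.trans hpq'.symm
        rw [if_pos h4] at h2; norm_num at h2
      · rw [if_neg h3] at h2
        by_cases h4 : q = p <;> simp [h4] at h2
  · rintro (⟨rfl, rfl⟩ | ⟨rfl, rfl⟩)
    · rfl
    · rw [midpoint_comm]

lemma xpt_inj {m' : ℕ} (a : Fin m' → Fin n) (p q p' q' : Fin n) :
    xpt (⇑b) a p q = xpt (⇑b) a p' q' ↔ (p = p' ∧ q = q') ∨ (p = q' ∧ q = p') := by
  rw [xpt_eq_fList, xpt_eq_fList]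
  constructor
  · intro h
    exact (mid_eq_iff b p q p' q').1 (fList_injective (⇑b) _ h)
  · intro h
    exact congrArg (fList (⇑b) (List.ofFn a)) ((mid_eq_iff b p q p' q').2 h)

lemma xpt_symm {m' : ℕ} (a : Fin m' → Fin n) (p q : Fin n) :
    xpt (⇑b) a p q = xpt (⇑b) a q p := by
  rw [xpt_inj]
  by_cases h : p = q
  · exact Or.inl ⟨h, h.symm⟩
  · exact Or.inr ⟨rfl, rfl⟩

lemma xpt_ne_pt {m' : ℕ} (a : Fin m' → Fin n) (r s : Fin n) (hrs : r ≠ s) (t : Fin n) :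
    xpt (⇑b) a r s ≠ b t := by
  intro h
  rw [xpt_eq_fList] at h
  have hr : 0 < b.coord r (fList (⇑b) (List.ofFn a) (midpoint ℝ (b r) (b s))) :=
    coord_fList_pos b _ _ (mid_nonneg b r s) r (by rw [coord_mid]; simp; positivity)
  have hs : 0 < b.coord s (fList (⇑b) (List.ofFn a) (midpoint ℝ (b r) (b s))) :=
    coord_fList_pos b _ _ (mid_nonneg b r s) s (by rw [coord_mid]; simp; positivity)
  rw [h, b.coord_apply] at hr hs
  split_ifs at hr hs with h1 h2
  · exact hrs (h1.trans h2.symm)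
  · norm_num at hs
  · norm_num at hr
  · norm_num at hr


lemma key_eq {m : ℕ} (hm : 1 ≤ m) (a : Fin (m - 1) → Fin n) (lam : ℝ)
    (u : Amb n → ℝ) (hu : IsEigen (⇑b) m u lam) (r s : Fin n) (hrs : r ≠ s) :
    (∑ k, u (xpt (⇑b) a r k)) + (∑ k, u (xpt (⇑b) a s k)) =
      (2 * (n : ℝ) - lam) * u (xpt (⇑b) a r s) := by
  classical
  have hn1 : 1 ≤ n := Nat.pos_of_ne_zero (by rintro rfl; exact r.elim0)
  set la := List.ofFn a with hla
  have hlal : la.length = m - 1 := by simp [hla]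
  have hlen : ∀ i : Fin n, (la ++ [i]).length = m := by
    intro i; simp [hlal]; omega
  set x := xpt (⇑b) a r s with hxdef
  have hxV : x ∈ V (⇑b) m := by
    have h0 := mem_V_of_list (⇑b) (la ++ [r]) s
    rw [hla, fList_append_single] at h0
    rw [← hla] at h0
    rw [hlen r] at h0
    exact h0
  have hxV0 : x ∉ V (⇑b) 0 := by
    rw [V_zero]
    rintro ⟨t, ht⟩
    exact xpt_ne_pt b a r s hrs t ht.symm
  -- identify the neighbour set
  have hcell : ∀ (i j : Fin n), xpt (⇑b) a i j ∈ fWord (⇑b) (fun q : Fin m =>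
      (Classical.choose (exists_ofFn (la ++ [i]) (hlen i))) q) '' Set.range ⇑b := by
    intro i j
    refine ⟨b j, Set.mem_range_self j, ?_⟩
    show fList (⇑b) (List.ofFn _) (b j) = _
    rw [Classical.choose_spec (exists_ofFn (la ++ [i]) (hlen i)), hla,
      fList_append_single]
  have hadj : {y | Adj (⇑b) m x y} =
      ↑(((univ.filter (· ≠ s)).image (fun k => xpt (⇑b) a r k)) ∪
        ((univ.filter (· ≠ r)).image (fun k => xpt (⇑b) a s k))) := by
    ext y
    simp only [Set.mem_setOf_eq, Finset.coe_union, Set.mem_union, Finset.mem_coe,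
      Finset.mem_image, Finset.mem_filter, Finset.mem_univ, true_and]
    constructor
    · rintro ⟨hne, w, ⟨-, ⟨k1, rfl⟩, hx1⟩, ⟨-, ⟨k2, rfl⟩, hy1⟩⟩
      have hwlen : (List.ofFn w).length = la.length + 1 := by
        simp [hlal]; omega
      have hx1' : fList (⇑b) (List.ofFn w) (b k1) =
          fList (⇑b) la (midpoint ℝ (b r) (b s)) := by
        show fWord (⇑b) w (b k1) = _
        rw [hx1, hxdef, xpt_eq_fList, hla]
      rcases addr b r s hrs la (List.ofFn w) k1 hwlen hx1' with ⟨hw, -⟩ | ⟨hw, -⟩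
      · left
        refine ⟨k2, ?_, ?_⟩
        · intro hk2
          apply hne
          rw [← hy1]
          show _ = fList (⇑b) (List.ofFn w) (b k2)
          rw [hw, hk2, hla, fList_append_single, hxdef]
        · rw [← hy1]
          show _ = fList (⇑b) (List.ofFn w) (b k2)
          rw [hw, hla, fList_append_single]
      · right
        refine ⟨k2, ?_, ?_⟩
        · intro hk2
          apply hne
          rw [← hy1]
          show _ = fList (⇑b) (List.ofFn w) (b k2)
          rw [hw, hk2, hla, fList_append_single, hxdef, xpt_symm]
        · rw [← hy1]
          show _ = fList (⇑b) (List.ofFn w) (b k2)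
          rw [hw, hla, fList_append_single]
    · rintro (⟨k, hk, rfl⟩ | ⟨k, hk, rfl⟩)
      · refine ⟨?_, _, hcell r s, hcell r k⟩
        intro h
        rcases (xpt_inj b a r s r k).1 h with ⟨-, h2⟩ | ⟨-, h2⟩
        · exact hk h2.symm
        · exact hrs h2.symm
      · have hxcell : x ∈ fWord (⇑b) (fun q =>
            (Classical.choose (exists_ofFn (la ++ [s]) (hlen s))) q) '' Set.range ⇑b := by
          rw [hxdef, xpt_symm b a r s]
          exact hcell s r
        refine ⟨?_, _, hxcell, hcell s k⟩
        intro h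
        rcases (xpt_inj b a r s s k).1 h with ⟨h1, -⟩ | ⟨h1, -⟩
        · exact hrs h1
        · exact hk h1.symm
  have hdisj : Disjoint ((univ.filter (· ≠ s)).image (fun k => xpt (⇑b) a r k))
      ((univ.filter (· ≠ r)).image (fun k => xpt (⇑b) a s k)) := by
    rw [Finset.disjoint_left]
    rintro z hz1 hz2
    obtain ⟨k1, hk1, rfl⟩ := Finset.mem_image.1 hz1
    obtain ⟨k2, hk2, heq⟩ := Finset.mem_image.1 hz2
    rw [Finset.mem_filter] at hk1 hk2
    rcases (xpt_inj b a s k2 r k1).1 heq with ⟨h1, -⟩ | ⟨-, h2⟩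
    · exact hrs h1.symm
    · exact hk2.2 h2
  have hinj : ∀ (i : Fin n) (t : Finset (Fin n)),
      Set.InjOn (fun k => xpt (⇑b) a i k) ↑t := by
    intro i t k1 hk1 k2 hk2 h
    rcases (xpt_inj b a i k1 i k2).1 h with ⟨-, h2⟩ | ⟨h1, h2⟩
    · exact h2
    · exact h2.trans h1
  have hlap := hu x ⟨hxV, hxV0⟩
  rw [lap, hadj, finsum_mem_coe_finset, Finset.sum_union hdisj,
    Finset.sum_image (fun y hy z hz h => hinj r _ hy hz h),
    Finset.sum_image (fun y hy z hz h => hinj s _ hy hz h)] at hlap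
  have hcard : ∀ i : Fin n, (univ.filter (· ≠ i)).card = n - 1 := by
    intro i
    rw [Finset.filter_ne', Finset.card_erase_of_mem (Finset.mem_univ i)]
    simp
  have hsub : ∀ i j : Fin n,
      ∑ k ∈ univ.filter (· ≠ j), (u x - u (xpt (⇑b) a i k)) =
        ((n : ℝ) - 1) * u x - (∑ k, u (xpt (⇑b) a i k)) + u (xpt (⇑b) a i j) := by
    intro i j
    rw [Finset.sum_sub_distrib, Finset.sum_const, hcard j, nsmul_eq_mul,
      Nat.cast_sub hn1, Nat.cast_one, Finset.filter_ne',
      Finset.sum_erase_eq_sub (Finset.mem_univ j)]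
    ring
  rw [hsub r s, hsub s r, ← hxdef] at hlap
  have hsymm : u (xpt (⇑b) a s r) = u x := by rw [hxdef, xpt_symm]
  rw [hsymm] at hlap
  have hux : u (xpt (⇑b) a r s) = u x := by rw [hxdef]
  rw [hux]
  linarith

end GSum

lemma indicator_identity (N : ℕ) (v : Fin N → Fin N → ℝ) (a0 b0 : Fin N)
    (hab : a0 ≠ b0) (i j : Fin N) :
      (if i ≠ j ∧ (i ≠ a0 ∧ i ≠ b0 ∧ j ≠ a0 ∧ j ≠ b0) then v i j else 0)
      = v i j - (if i = j then v i j else 0)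
        - (if i = a0 then v i j else 0) - (if j = a0 then v i j else 0)
        - (if i = b0 then v i j else 0) - (if j = b0 then v i j else 0)
        + ((if i = a0 ∧ j = a0 then v i j else 0) + (if i = a0 ∧ j = a0 then v i j else 0))
        + ((if i = b0 ∧ j = b0 then v i j else 0) + (if i = b0 ∧ j = b0 then v i j else 0))
        + (if i = a0 ∧ j = b0 then v i j else 0) + (if i = b0 ∧ j = a0 then v i j else 0) := by
    by_cases h1 : i = j <;> by_cases h2 : i = a0 <;> by_cases h3 : i = b0 <;>
      by_cases h4 : j = a0 <;> by_cases h5 : j = b0 <;>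
      simp_all


/-- The G-sum formula (equation (3)). -/
theorem G_sum_formula
    (n : ℕ) (hn : 2 ≤ n) (pts : Fin n → Amb n) (hpts : AffineIndependent ℝ pts)
    (m : ℕ) (hm : 1 ≤ m) (a : Fin (m - 1) → Fin n)
    (a0 b0 : Fin n) (hab : a0 ≠ b0) (lam : ℝ) (hlam : lam ≠ 2)
    (u : Amb n → ℝ) (hu : IsEigen pts m u lam) :
    (∑ i : Fin n, ∑ j ∈ Finset.univ.filter
        (fun j => i < j ∧ i ≠ a0 ∧ i ≠ b0 ∧ j ≠ a0 ∧ j ≠ b0), u (xpt pts a i j)) =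
      u (xpt pts a a0 a0) + u (xpt pts a b0 b0) -
        (2 * (n : ℝ) - 1 - lam) * u (xpt pts a a0 b0) +
        (((n : ℝ) - 1) / (2 - lam)) * ∑ j : Fin n, u (xpt pts a j j) := by
  classical
  have hb_tot : affineSpan ℝ (Set.range pts) = ⊤ :=
    hpts.affineSpan_eq_top_iff_card_eq_finrank_add_one.mpr (by
      rw [Fintype.card_fin, finrank_euclideanSpace_fin]; omega)
  let b : AffineBasis (Fin n) ℝ (Amb n) := ⟨pts, hpts, hb_tot⟩
  have hb : ⇑b = pts := rfl
  obtain ⟨v, hv⟩ : ∃ v : Fin n → Fin n → ℝ, ∀ i j, v i j = u (xpt pts a i j) :=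
    ⟨fun i j => u (xpt pts a i j), fun _ _ => rfl⟩
  obtain ⟨R, hR⟩ : ∃ R : Fin n → ℝ, ∀ i, R i = ∑ k, v i k :=
    ⟨fun i => ∑ k, v i k, fun _ => rfl⟩
  have hsymm : ∀ i j, v i j = v j i := by
    intro i j
    rw [hv, hv, ← hb]
    exact congrArg u (GSum.xpt_symm b a i j)
  have hkey : ∀ r s : Fin n, r ≠ s → R r + R s = (2 * (n:ℝ) - lam) * v r s := by
    intro r s hrs
    have h0 := GSum.key_eq b hm a lam u hu r s hrs
    rw [hb] at h0
    rw [hR, hR, hv]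
    rw [show (∑ k, v r k) = ∑ k, u (xpt pts a r k) from
        Finset.sum_congr rfl fun k _ => hv r k,
      show (∑ k, v s k) = ∑ k, u (xpt pts a s k) from
        Finset.sum_congr rfl fun k _ => hv s k]
    exact h0
  -- basic filtered-sum facts
  have hfilter_sum : ∀ (i : Fin n) (g : Fin n → ℝ),
      ∑ j ∈ univ.filter (fun j => j ≠ i), g j = (∑ j, g j) - g i := by
    intro i g
    rw [Finset.filter_ne', Finset.sum_erase_eq_sub (Finset.mem_univ i)]
  have hfilter_card : ∀ i : Fin n, ((univ.filter (fun j => j ≠ i)).card : ℝ) = (n:ℝ) - 1 := by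
    intro i
    rw [Finset.filter_ne', Finset.card_erase_of_mem (Finset.mem_univ i)]
    simp only [Finset.card_univ, Fintype.card_fin]
    rw [Nat.cast_sub (by omega), Nat.cast_one]
  -- summed eigen-equations
  have eqT : 2*((n:ℝ)-1) * (∑ i, R i) = (2*(n:ℝ) - lam) * ((∑ i, R i) - (∑ i, v i i)) := by
    have lhs_eq : ∑ i : Fin n, ∑ j ∈ univ.filter (fun j => j ≠ i), (R i + R j)
        = 2*((n:ℝ)-1) * (∑ i, R i) := by
      have h1 : ∀ i : Fin n, ∑ j ∈ univ.filter (fun j => j ≠ i), (R i + R j)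
          = ((n:ℝ)-1) * R i + ((∑ j, R j) - R i) := by
        intro i
        rw [Finset.sum_add_distrib, Finset.sum_const, nsmul_eq_mul, hfilter_card i,
          hfilter_sum i R]
      rw [Finset.sum_congr rfl (fun i _ => h1 i), Finset.sum_add_distrib,
        Finset.sum_sub_distrib, ← Finset.mul_sum, Finset.sum_const, nsmul_eq_mul,
        Finset.card_univ, Fintype.card_fin]
      ring
    have rhs_eq : ∑ i : Fin n, ∑ j ∈ univ.filter (fun j => j ≠ i), (R i + R j)
        = (2*(n:ℝ) - lam) * ((∑ i, R i) - (∑ i, v i i)) := by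
      have h1 : ∀ i : Fin n, ∑ j ∈ univ.filter (fun j => j ≠ i), (R i + R j)
          = (2*(n:ℝ) - lam) * ∑ j ∈ univ.filter (fun j => j ≠ i), v i j := by
        intro i
        rw [Finset.mul_sum]
        refine Finset.sum_congr rfl fun j hj => ?_
        exact hkey i j (Ne.symm (Finset.mem_filter.1 hj).2)
      rw [Finset.sum_congr rfl (fun i _ => h1 i), ← Finset.mul_sum]
      congr 1
      rw [Finset.sum_congr rfl (fun i _ => hfilter_sum i (v i)), Finset.sum_sub_distrib]
      congr 1
      exact Finset.sum_congr rfl fun i _ => (hR i).symm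
    rw [← lhs_eq, rhs_eq]
  -- goal sum as an if-sum
  have hgoal_if : (∑ i : Fin n, ∑ j ∈ Finset.univ.filter
        (fun j => i < j ∧ i ≠ a0 ∧ i ≠ b0 ∧ j ≠ a0 ∧ j ≠ b0), u (xpt pts a i j))
      = ∑ i : Fin n, ∑ j : Fin n,
          (if i < j ∧ (i ≠ a0 ∧ i ≠ b0 ∧ j ≠ a0 ∧ j ≠ b0) then v i j else 0) := by
    refine Finset.sum_congr rfl fun i _ => ?_
    rw [Finset.sum_filter]
    refine Finset.sum_congr rfl fun j _ => ?_
    rw [hv]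
  have hswap : (∑ i : Fin n, ∑ j : Fin n,
        (if i < j ∧ (i ≠ a0 ∧ i ≠ b0 ∧ j ≠ a0 ∧ j ≠ b0) then v i j else 0))
      = ∑ i : Fin n, ∑ j : Fin n,
          (if j < i ∧ (i ≠ a0 ∧ i ≠ b0 ∧ j ≠ a0 ∧ j ≠ b0) then v i j else 0) := by
    rw [Finset.sum_comm]
    refine Finset.sum_congr rfl fun i _ => Finset.sum_congr rfl fun j _ => ?_
    have hiff : (j < i ∧ (j ≠ a0 ∧ j ≠ b0 ∧ i ≠ a0 ∧ i ≠ b0)) ↔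
        (j < i ∧ (i ≠ a0 ∧ i ≠ b0 ∧ j ≠ a0 ∧ j ≠ b0)) := by tauto
    exact if_congr hiff (hsymm j i) rfl
  have hcomb : (∑ i : Fin n, ∑ j : Fin n,
        (if i < j ∧ (i ≠ a0 ∧ i ≠ b0 ∧ j ≠ a0 ∧ j ≠ b0) then v i j else 0))
      + (∑ i : Fin n, ∑ j : Fin n,
        (if j < i ∧ (i ≠ a0 ∧ i ≠ b0 ∧ j ≠ a0 ∧ j ≠ b0) then v i j else 0))
      = ∑ i : Fin n, ∑ j : Fin n,
          (if i ≠ j ∧ (i ≠ a0 ∧ i ≠ b0 ∧ j ≠ a0 ∧ j ≠ b0) then v i j else 0) := by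
    rw [← Finset.sum_add_distrib]
    refine Finset.sum_congr rfl fun i _ => ?_
    rw [← Finset.sum_add_distrib]
    refine Finset.sum_congr rfl fun j _ => ?_
    by_cases hq : i ≠ a0 ∧ i ≠ b0 ∧ j ≠ a0 ∧ j ≠ b0
    · rcases lt_trichotomy i j with h | h | h
      · rw [if_pos ⟨h, hq⟩, if_neg (fun hc => lt_asymm h hc.1), if_pos ⟨ne_of_lt h, hq⟩]
        ring
      · subst h
        rw [if_neg (fun hc : i < i ∧ _ => lt_irrefl i hc.1),
          if_neg (fun hc : i ≠ i ∧ _ => hc.1 rfl)]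
        norm_num
      · rw [if_neg (fun hc => lt_asymm h hc.1), if_pos ⟨h, hq⟩, if_pos ⟨ne_of_gt h, hq⟩]
        ring
    · rw [if_neg (fun hc => hq hc.2), if_neg (fun hc => hq hc.2), if_neg (fun hc => hq hc.2)]
      norm_num
  have hpoint := indicator_identity n v a0 b0 hab
  have hbig : (∑ i : Fin n, ∑ j : Fin n,
        (if i ≠ j ∧ (i ≠ a0 ∧ i ≠ b0 ∧ j ≠ a0 ∧ j ≠ b0) then v i j else 0))
      = ((∑ i, R i) - (∑ i, v i i)) - 2 * R a0 - 2 * R b0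
        + 2 * v a0 a0 + 2 * v b0 b0 + 2 * v a0 b0 := by
    rw [Finset.sum_congr rfl (fun i _ => Finset.sum_congr rfl (fun j _ => hpoint i j))]
    have e1 : (∑ i : Fin n, ∑ j : Fin n, (if i = j then v i j else 0)) = ∑ i, v i i := by
      refine Finset.sum_congr rfl fun i _ => ?_
      rw [Finset.sum_ite_eq Finset.univ i (fun j => v i j), if_pos (Finset.mem_univ i)]
    have e2 : ∀ c : Fin n, (∑ i : Fin n, ∑ j : Fin n, (if i = c then v i j else 0)) = R c := by
      intro c
      have h1 : ∀ i : Fin n, (∑ j : Fin n, (if i = c then v i j else 0))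
          = if i = c then R i else 0 := by
        intro i
        by_cases h : i = c
        · subst h; simp [hR]
        · simp [h]
      rw [Finset.sum_congr rfl (fun i _ => h1 i),
        Finset.sum_ite_eq' Finset.univ c R, if_pos (Finset.mem_univ c)]
    have e3 : ∀ c : Fin n, (∑ i : Fin n, ∑ j : Fin n, (if j = c then v i j else 0)) = R c := by
      intro c
      have h1 : ∀ i : Fin n, (∑ j : Fin n, (if j = c then v i j else 0)) = v c i := by
        intro i
        rw [Finset.sum_ite_eq' Finset.univ c (fun j => v i j), if_pos (Finset.mem_univ c)]
        exact hsymm i c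
      rw [Finset.sum_congr rfl (fun i _ => h1 i), hR]
    have e4 : ∀ c d : Fin n, (∑ i : Fin n, ∑ j : Fin n,
        (if i = c ∧ j = d then v i j else 0)) = v c d := by
      intro c d
      have h1 : ∀ i : Fin n, (∑ j : Fin n, (if i = c ∧ j = d then v i j else 0))
          = if i = c then v i d else 0 := by
        intro i
        by_cases h : i = c
        · subst h; simp
        · simp [h]
      rw [Finset.sum_congr rfl (fun i _ => h1 i),
        Finset.sum_ite_eq' Finset.univ c (fun i => v i d), if_pos (Finset.mem_univ c)]
    have e0 : (∑ i : Fin n, ∑ j : Fin n, v i j) = ∑ i, R i :=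
      Finset.sum_congr rfl fun i _ => (hR i).symm
    simp only [Finset.sum_add_distrib, Finset.sum_sub_distrib]
    rw [e0, e1, e2 a0, e2 b0, e3 a0, e3 b0, e4 a0 a0, e4 b0 b0, e4 a0 b0, e4 b0 a0,
      hsymm b0 a0]
    ring
  -- assemble
  have h2lam : (2:ℝ) - lam ≠ 0 := sub_ne_zero.mpr (Ne.symm hlam)
  have keyab := hkey a0 b0 hab
  have hdiv : (((n : ℝ) - 1) / (2 - lam)) * (∑ j : Fin n, v j j)
      = ((∑ i, R i) - (∑ i, v i i)) / 2 := by
    rw [div_mul_eq_mul_div, div_eq_div_iff h2lam (by norm_num)]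
    linear_combination eqT
  have hsumdiag : (∑ j : Fin n, u (xpt pts a j j)) = ∑ j : Fin n, v j j :=
    Finset.sum_congr rfl fun j _ => (hv j j).symm
  have h2G := hcomb
  rw [← hswap] at h2G
  rw [hgoal_if, ← hv a0 a0, ← hv b0 b0, ← hv a0 b0, hsumdiag, hdiv]
  linear_combination (1/2 : ℝ) * h2G + (1/2 : ℝ) * hbig - keyab
end
end
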